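/- arXiv:1205.5009 — 9 statements merged into one kernel-verified Lean document; each statement's English description precedes it below -/
import Mathlib

section
/- Let G be a locally finite group, φ: G → G an endomorphism, and F a finite subgroup of G. Then the sequence of indices [T_{n+1}(φ,F) : T_n(φ,F)] is eventually constant: there exist n₀ > 0 and an integer α ≥ 1 such that [T_{n+1}(φ,F) : T_n(φ,F)] = α for all n ≥ n₀, and consequently H_alg(φ,F) = lim_n log|T_n(φ,F)|/n = log α. -/
open Filter Topology Pointwise

namespace Statement3Aux

variable {G : Type*} [Group G]

def T (φ : Monoid.End G) (F : Subgroup G) (n : ℕ) : Subgroup G :=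
  ⨆ i ∈ Finset.range n, F.map (φ ^ i : G →* G)

variable (φ : Monoid.End G) (F : Subgroup G)

lemma map_pow_succ (j : ℕ) :
    (F.map (φ ^ j : G →* G)).map (φ : G →* G) = F.map (φ ^ (j+1) : G →* G) := by
  exact (Subgroup.map_map F (φ : G →* G) (φ ^ j : G →* G)).trans
    (congrArg (fun ψ : Monoid.End G => F.map (ψ : G →* G)) (pow_succ' φ j).symm)

lemma map_pow_zero : F.map (φ ^ 0 : G →* G) = F := by
  exact (congrArg (fun ψ : Monoid.End G => F.map (ψ : G →* G)) (pow_zero φ)).trans (Subgroup.map_id F)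

lemma le_T {i n : ℕ} (h : i < n) : F.map (φ ^ i : G →* G) ≤ T φ F n :=
  le_iSup₂ (f := fun (i : ℕ) (_ : i ∈ Finset.range n) => F.map (φ ^ i : G →* G)) i
    (Finset.mem_range.2 h)

lemma T_mono {m n : ℕ} (h : m ≤ n) : T φ F m ≤ T φ F n := by
  apply iSup₂_le
  intro i hi
  exact le_T φ F (lt_of_lt_of_le (Finset.mem_range.1 hi) h)

lemma F_le_T {n : ℕ} (h : 0 < n) : F ≤ T φ F n := by
  have := le_T φ F h
  exact (map_pow_zero φ F).symm.le.trans this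

lemma T_succ (n : ℕ) : T φ F (n + 1) = F ⊔ (T φ F n).map (φ : G →* G) := by
  apply le_antisymm
  · apply iSup₂_le
    intro i hi
    cases i with
    | zero => exact (map_pow_zero φ F).le.trans le_sup_left
    | succ j =>
      have hjn : j < n := by have := Finset.mem_range.1 hi; omega
      calc F.map (φ ^ (j+1) : G →* G)
          = (F.map (φ ^ j : G →* G)).map (φ : G →* G) := (map_pow_succ φ F j).symm
        _ ≤ (T φ F n).map (φ : G →* G) := Subgroup.map_mono (le_T φ F hjn)
        _ ≤ F ⊔ (T φ F n).map (φ : G →* G) := le_sup_right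
  · apply sup_le
    · exact F_le_T φ F (Nat.succ_pos n)
    · apply Subgroup.map_le_iff_le_comap.2
      apply iSup₂_le; intro i hi
      apply Subgroup.map_le_iff_le_comap.1
      refine (map_pow_succ φ F i).le.trans ?_
      exact le_T φ F (by have := Finset.mem_range.1 hi; omega)

lemma map_T_le (n : ℕ) : (T φ F n).map (φ : G →* G) ≤ T φ F (n + 1) := by
  rw [T_succ]; exact le_sup_right

lemma T_finite (hLF : ∀ s : Finset G, ((Subgroup.closure (s : Set G) : Subgroup G) : Set G).Finite)
    (hFfin : (F : Set G).Finite) (n : ℕ) : ((T φ F n : Subgroup G) : Set G).Finite := by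
  have hU : (⋃ i ∈ Finset.range n, ((F.map (φ ^ i : G →* G) : Subgroup G) : Set G)).Finite := by
    apply Set.Finite.biUnion (Finset.range n).finite_toSet
    intro i _
    exact hFfin.image (φ ^ i : G →* G)
  have hclosure : Subgroup.closure (hU.toFinset : Set G) = T φ F n := by
    rw [Set.Finite.coe_toFinset]
    simp only [Subgroup.closure_iUnion, Subgroup.closure_eq]
    rfl
  have := hLF hU.toFinset
  rwa [hclosure] at this

lemma relindex_card (n : ℕ) :
    (T φ F n).relIndex (T φ F (n+1)) =
      Nat.card (↥(T φ F (n+1)) ⧸ (T φ F n).subgroupOf (T φ F (n+1))) := rfl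

lemma card_mul_relindex (n : ℕ) :
    Nat.card (T φ F n) * (T φ F n).relIndex (T φ F (n+1)) = Nat.card (T φ F (n+1)) := by
  have h := Subgroup.card_mul_index ((T φ F n).subgroupOf (T φ F (n+1)))
  rwa [Nat.card_congr (Subgroup.subgroupOfEquivOfLe (T_mono φ F (Nat.le_succ n))).toEquiv] at h

lemma relindex_antitone [F.Normal]
    (hLF : ∀ s : Finset G, ((Subgroup.closure (s : Set G) : Subgroup G) : Set G).Finite)
    (hFfin : (F : Set G).Finite) (n : ℕ) :
    (T φ F (n+1)).relIndex (T φ F (n+2)) ≤ (T φ F n).relIndex (T φ F (n+1)) := by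
  haveI : Finite ↥(T φ F (n+1)) := (T_finite φ F hLF hFfin (n+1)).to_subtype
  have hmapsub : ∀ x : G, x ∈ T φ F (n+1) → φ x ∈ T φ F (n+2) := fun x hx =>
    map_T_le φ F (n+1) (Subgroup.mem_map_of_mem _ hx)
  set g : ↥(T φ F (n+1)) → ↥(T φ F (n+2)) := fun x => ⟨φ x, hmapsub x x.2⟩ with hg
  have hresp : ∀ x y : ↥(T φ F (n+1)),
      (QuotientGroup.leftRel ((T φ F n).subgroupOf (T φ F (n+1)))) x y →
      (QuotientGroup.leftRel ((T φ F (n+1)).subgroupOf (T φ F (n+2)))) (g x) (g y) := by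
    intro x y hxy
    rw [QuotientGroup.leftRel_apply, Subgroup.mem_subgroupOf] at hxy ⊢
    have : φ ((x : G)⁻¹ * y) ∈ T φ F (n+1) :=
      map_T_le φ F n (Subgroup.mem_map_of_mem _ hxy)
    simpa [hg, map_mul, map_inv] using this
  set q : (↥(T φ F (n+1)) ⧸ (T φ F n).subgroupOf (T φ F (n+1))) →
      (↥(T φ F (n+2)) ⧸ (T φ F (n+1)).subgroupOf (T φ F (n+2))) :=
    Quotient.map' g hresp with hq
  have hsurj : Function.Surjective q := by
    intro z
    induction z using Quotient.inductionOn' with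
    | h y =>
      have hT2 : T φ F (n+2) = (T φ F (n+1)).map (φ : G →* G) ⊔ F := by
        rw [T_succ φ F (n+1), sup_comm]
      have hy : (y : G) ∈ ((((T φ F (n+1)).map (φ : G →* G)) : Set G) * (F : Set G)) := by
        rw [← Subgroup.mul_normal, ← hT2]
        exact y.2
      obtain ⟨u, hu, f, hf, huf⟩ := Set.mem_mul.1 hy
      obtain ⟨x, hx, hxu⟩ := Subgroup.mem_map.1 hu
      refine ⟨Quotient.mk'' ⟨x, hx⟩, ?_⟩
      rw [hq, Quotient.map'_mk'']
      apply Quotient.sound'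
      rw [QuotientGroup.leftRel_apply, Subgroup.mem_subgroupOf]
      have key : (φ x)⁻¹ * (y : G) = f := by
        subst hxu; rw [← huf]; exact inv_mul_cancel_left _ _
      show (φ x)⁻¹ * (y : G) ∈ T φ F (n+1)
      rw [key]
      exact F_le_T φ F (by omega) hf
  rw [relindex_card, relindex_card]
  exact Nat.card_le_card_of_surjective q hsurj

end Statement3Aux

/-- `G` locally finite, `φ` an endomorphism, `F` a finite normal subgroup,
`T_n(φ,F) = F·φ(F)·…·φ^{n-1}(F)`.  The indices `[T_{n+1} : T_n]` are eventually constant: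
there are `n₀ > 0` and `α ≥ 1` with `[T_{n+1} : T_n] = α` for all `n ≥ n₀`, and
`H_alg(φ,F) = lim_n log|T_n|/n = log α`. -/
theorem statement3 {G : Type*} [Group G]
    (hLF : ∀ s : Finset G, ((Subgroup.closure (s : Set G) : Subgroup G) : Set G).Finite)
    (φ : Monoid.End G) (F : Subgroup G) [F.Normal] (hFfin : (F : Set G).Finite) :
    ∃ n₀ : ℕ, 0 < n₀ ∧ ∃ α : ℕ, 1 ≤ α ∧
      (∀ n ≥ n₀,
        ((⨆ i ∈ Finset.range n, F.map (φ ^ i : G →* G) : Subgroup G).relIndex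
          (⨆ i ∈ Finset.range (n + 1), F.map (φ ^ i : G →* G) : Subgroup G)) = α) ∧
      Tendsto
        (fun n : ℕ =>
          Real.log (Nat.card (⨆ i ∈ Finset.range n, F.map (φ ^ i : G →* G) : Subgroup G)) / n)
        atTop (𝓝 (Real.log α)) := by
  classical
  set T := Statement3Aux.T φ F with hT
  set c : ℕ → ℕ := fun n => Nat.card (T n) with hc
  set a : ℕ → ℕ := fun n => (T n).relIndex (T (n+1)) with ha
  have hfin : ∀ n, Finite ↥(T n) := fun n =>
    (Statement3Aux.T_finite φ F hLF hFfin n).to_subtype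
  have hc_pos : ∀ n, 0 < c n := by
    intro n
    haveI := hfin n
    exact Nat.card_pos
  have hca : ∀ n, c n * a n = c (n+1) := fun n => Statement3Aux.card_mul_relindex φ F n
  have hanti : Antitone a :=
    antitone_nat_of_succ_le (fun n => Statement3Aux.relindex_antitone φ F hLF hFfin n)
  obtain ⟨N, hN⟩ : ∃ N, a N = sInf (Set.range a) := by
    have := Nat.sInf_mem (⟨a 0, 0, rfl⟩ : (Set.range a).Nonempty)
    obtain ⟨N, hN⟩ := this
    exact ⟨N, hN⟩
  set α : ℕ := a N with hα
  have hα1 : 1 ≤ α := by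
    rcases Nat.eq_zero_or_pos α with h0 | h1
    · exfalso
      have := hca N
      rw [← hα] at this  -- no-op
      rw [h0, mul_zero] at this
      exact (hc_pos (N+1)).ne' this.symm
    · exact h1
  have ha_eq : ∀ n, N ≤ n → a n = α := by
    intro n hn
    refine le_antisymm (hanti hn) ?_
    have h := Nat.sInf_le (Set.mem_range_self (f := a) n)
    rwa [← hN] at h
  have hgrow : ∀ k, c (N + k) = c N * α ^ k := by
    intro k
    induction k with
    | zero => simp
    | succ k ih =>
      have : c (N + k) * a (N + k) = c (N + k + 1) := hca (N + k)
      rw [ha_eq (N + k) (Nat.le_add_right N k), ih] at this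
      show c (N + k + 1) = c N * α ^ (k + 1)
      rw [← this, pow_succ, mul_assoc]
  refine ⟨N + 1, Nat.succ_pos N, α, hα1, ?_, ?_⟩
  · intro n hn
    exact ha_eq n (by omega)
  · have hev : (fun n : ℕ => Real.log (c N) / n + (1 - (N : ℝ) / n) * Real.log α)
        =ᶠ[atTop] (fun n : ℕ => Real.log (c n) / n) := by
      filter_upwards [eventually_ge_atTop (N + 1)] with n hn
      have hn0 : (n : ℝ) ≠ 0 := Nat.cast_ne_zero.2 (by omega)
      obtain ⟨k, rfl⟩ : ∃ k, n = N + k := ⟨n - N, by omega⟩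
      have hcN : ((c N : ℕ) : ℝ) ≠ 0 := Nat.cast_ne_zero.2 (hc_pos N).ne'
      have hαne : ((α : ℕ) : ℝ) ≠ 0 := Nat.cast_ne_zero.2 (by omega)
      rw [hgrow k, Nat.cast_mul, Nat.cast_pow,
        Real.log_mul hcN (pow_ne_zero k hαne), Real.log_pow]
      have hNk : ((N + k : ℕ) : ℝ) ≠ 0 := Nat.cast_ne_zero.2 (by omega)
      push_cast at hNk ⊢
      field_simp
      ring
    have hlim : Tendsto (fun n : ℕ => Real.log (c N) / n + (1 - (N : ℝ) / n) * Real.log α)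
        atTop (𝓝 (Real.log α)) := by
      have h1 := tendsto_const_div_atTop_nhds_zero_nat (Real.log (c N))
      have h2 := tendsto_const_div_atTop_nhds_zero_nat (N : ℝ)
      have h3 : Tendsto (fun n : ℕ => Real.log (c N) / n + (1 - (N : ℝ) / n) * Real.log α)
          atTop (𝓝 (0 + (1 - 0) * Real.log α)) :=
        h1.add (((tendsto_const_nhds (x := (1 : ℝ))).sub h2).mul_const (Real.log α))
      have : (0 : ℝ) + (1 - 0) * Real.log α = Real.log α := by ring
      rwa [this] at h3
    exact Tendsto.congr' hev hlim
end

section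
/- Let K be a compact group, ψ: K → K a continuous endomorphism, and U an open normal subgroup of K. For n > 0 let C_n = C_n(ψ,U) and α_n = [C_n : C_{n+1}]. Then α_{n+1} divides α_n for every n > 0; in particular the sequence (α_n) is eventually constant. -/
section Aux

variable {K : Type*} [Group K] (ψ : Monoid.End K) (U : Subgroup K)

/-- The subgroups `C n`. -/
private def Caux (n : ℕ) : Subgroup K := ⨅ i ∈ Finset.range n, U.comap (ψ ^ i : K →* K)

private lemma mem_Caux {n : ℕ} {x : K} :
    x ∈ Caux ψ U n ↔ ∀ i < n, (ψ ^ i : K →* K) x ∈ U := by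
  simp only [Caux, Subgroup.mem_iInf, Subgroup.mem_comap, Finset.mem_range]
  rfl

private lemma Caux_antitone : Antitone (Caux ψ U) := by
  intro a b hab x hx
  rw [mem_Caux] at hx ⊢
  exact fun i hi => hx i (lt_of_lt_of_le hi hab)

private lemma psi_pow_succ_apply (i : ℕ) (x : K) :
    (ψ ^ (i + 1) : K →* K) x = (ψ ^ i : K →* K) (ψ x) := by
  rw [pow_succ]
  rfl

private lemma psi_mem_Caux {n : ℕ} {x : K} (hx : x ∈ Caux ψ U (n + 1)) :
    ψ x ∈ Caux ψ U n := by
  rw [mem_Caux] at hx ⊢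
  intro i hi
  have := hx (i + 1) (by omega)
  rwa [psi_pow_succ_apply] at this

private lemma mem_Caux_succ {n : ℕ} {x : K} (_hx : x ∈ Caux ψ U n) (hψx : ψ x ∈ Caux ψ U n)
    (hxU : x ∈ U) : x ∈ Caux ψ U (n + 1) := by
  rw [mem_Caux] at hψx ⊢
  intro i hi
  rcases i with _ | j
  · simpa using hxU
  · rw [psi_pow_succ_apply]
    exact hψx j (by omega)

private lemma Caux_normal [U.Normal] (n : ℕ) : (Caux ψ U n).Normal := by
  constructor
  intro x hx g
  rw [mem_Caux] at hx ⊢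
  intro i hi
  rw [map_mul, map_mul, map_inv]
  exact Subgroup.Normal.conj_mem ‹U.Normal› _ (hx i hi) _

/-- Divisibility of the successive relative indices. -/
private lemma Caux_dvd [U.Normal] (n : ℕ) :
    (Caux ψ U (n + 2)).relIndex (Caux ψ U (n + 1)) ∣
      (Caux ψ U (n + 1)).relIndex (Caux ψ U n) := by
  set Cn := Caux ψ U n
  set Cn1 := Caux ψ U (n + 1)
  set Cn2 := Caux ψ U (n + 2)
  have hn1 : Cn1.Normal := Caux_normal ψ U (n + 1)
  have hn2 : Cn2.Normal := Caux_normal ψ U (n + 2)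
  have h12 : Cn2 ≤ Cn1 := Caux_antitone ψ U (by omega)
  have h01 : Cn1 ≤ Cn := Caux_antitone ψ U (by omega)
  haveI : (Cn1.subgroupOf Cn).Normal := hn1.subgroupOf Cn
  haveI : (Cn2.subgroupOf Cn1).Normal := hn2.subgroupOf Cn1
  -- restriction of ψ to a hom Cn1 →* Cn
  let g : Cn1 →* Cn :=
    ((ψ : K →* K).comp Cn1.subtype).codRestrict Cn (fun x => psi_mem_Caux ψ U x.2)
  let f : Cn1 →* Cn ⧸ (Cn1.subgroupOf Cn) := (QuotientGroup.mk' _).comp g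
  have hker : (Cn2.subgroupOf Cn1) ≤ f.ker := by
    intro x hx
    have : ψ (x : K) ∈ Cn1 := psi_mem_Caux ψ U hx
    simp only [f, MonoidHom.mem_ker, MonoidHom.comp_apply, QuotientGroup.mk'_apply,
      QuotientGroup.eq_one_iff]
    exact this
  let φ : (Cn1 ⧸ (Cn2.subgroupOf Cn1)) →* (Cn ⧸ (Cn1.subgroupOf Cn)) :=
    QuotientGroup.lift _ f hker
  have hinj : Function.Injective φ := by
    rw [← MonoidHom.ker_eq_bot_iff, eq_bot_iff]
    intro q hq
    induction q using QuotientGroup.induction_on with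
    | H x =>
      rw [MonoidHom.mem_ker] at hq
      have hfx : f x = 1 := hq
      have hψx : ψ (x : K) ∈ Cn1 := by
        simp only [f, MonoidHom.comp_apply, QuotientGroup.mk'_apply,
          QuotientGroup.eq_one_iff] at hfx
        exact hfx
      have hx2 : (x : K) ∈ Cn2 :=
        mem_Caux_succ ψ U x.2 hψx (by
          have := x.2
          rw [mem_Caux] at this
          simpa using this 0 (by omega))
      have : (QuotientGroup.mk x : Cn1 ⧸ (Cn2.subgroupOf Cn1)) = 1 := by
        rw [QuotientGroup.eq_one_iff]
        exact hx2
      simp [this]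
  -- now compute cardinalities
  have hcard : Nat.card (Cn1 ⧸ (Cn2.subgroupOf Cn1)) ∣ Nat.card (Cn ⧸ (Cn1.subgroupOf Cn)) := by
    have h1 : Nat.card (Cn1 ⧸ (Cn2.subgroupOf Cn1)) = Nat.card φ.range :=
      Nat.card_congr (Equiv.ofInjective φ hinj)
    rw [h1]
    exact Subgroup.card_subgroup_dvd_card φ.range
  simpa [Subgroup.relIndex, Subgroup.index] using hcard

end Aux

/-- `K` compact group, `ψ` continuous endomorphism, `U` open normal subgroup,
`C_n = ⋂_{i=0}^{n-1} ψ^{-i}(U)`, `α_n = [C_n : C_{n+1}]`.  Then `α_{n+1} ∣ α_n` for all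
`n > 0`; in particular the sequence `(α_n)` is eventually constant. -/
theorem statement5 {K : Type*} [Group K] [TopologicalSpace K] [IsTopologicalGroup K]
    [CompactSpace K]
    (ψ : Monoid.End K) (hψ : Continuous ψ)
    (U : Subgroup K) [U.Normal] (hU : IsOpen (U : Set K))
    (α : ℕ → ℕ)
    (hα : ∀ n : ℕ,
      α n = ((⨅ i ∈ Finset.range (n + 1), U.comap (ψ ^ i : K →* K) : Subgroup K).relIndex
        (⨅ i ∈ Finset.range n, U.comap (ψ ^ i : K →* K) : Subgroup K))) :
    (∀ n : ℕ, 0 < n → α (n + 1) ∣ α n) ∧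
    ∃ n₀ : ℕ, ∃ a : ℕ, ∀ n ≥ n₀, α n = a := by
  have hαC : ∀ n, α n = (Caux ψ U (n + 1)).relIndex (Caux ψ U n) := hα
  -- continuity of powers of ψ
  have hcont : ∀ i : ℕ, Continuous (ψ ^ i : K →* K) := by
    intro i
    induction i with
    | zero => simpa [pow_zero] using continuous_id
    | succ j ih =>
      have : ((ψ ^ (j + 1) : Monoid.End K) : K → K) = (ψ ^ j : K →* K) ∘ ψ := by
        funext x; exact psi_pow_succ_apply ψ j x
      rw [this]
      exact ih.comp hψ
  -- each C n has finite index
  have hfin : ∀ n : ℕ, (Caux ψ U n).index ≠ 0 := by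
    intro n
    haveI hFI : ∀ i : ℕ, (U.comap (ψ ^ i : K →* K)).FiniteIndex := fun i => by
      have hopen : IsOpen ((U.comap (ψ ^ i : K →* K) : Subgroup K) : Set K) :=
        hU.preimage (hcont i)
      haveI := Subgroup.quotient_finite_of_isOpen (U.comap (ψ ^ i : K →* K)) hopen
      exact Subgroup.finiteIndex_of_finite_quotient
    haveI : (Caux ψ U n).FiniteIndex :=
      Subgroup.finiteIndex_iInf' (fun i => U.comap (ψ ^ i : K →* K)) (fun i _ => hFI i)
    exact Subgroup.FiniteIndex.index_ne_zero
  have hne : ∀ n : ℕ, α n ≠ 0 := by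
    intro n
    have hle : Caux ψ U (n + 1) ≤ Caux ψ U n := Caux_antitone ψ U (by omega)
    have := Subgroup.relIndex_mul_index hle
    intro h0
    rw [hαC n] at h0
    rw [h0, zero_mul] at this
    exact hfin (n + 1) this.symm
  have hdvd : ∀ n : ℕ, α (n + 1) ∣ α n := by
    intro n
    rw [hαC n, hαC (n + 1)]
    exact Caux_dvd ψ U n
  refine ⟨fun n _ => hdvd n, ?_⟩
  -- antitone sequence of positive naturals is eventually constant
  have hmono : ∀ m n : ℕ, m ≤ n → α n ≤ α m := by
    intro m n hmn
    induction n with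
    | zero =>
      have : m = 0 := Nat.le_zero.mp hmn
      subst this; exact le_rfl
    | succ k ih =>
      rcases Nat.lt_or_ge m (k + 1) with h | h
      · exact le_trans (Nat.le_of_dvd (Nat.pos_of_ne_zero (hne k)) (hdvd k)) (ih (by omega))
      · have : m = k + 1 := by omega
        subst this; exact le_refl _
  obtain ⟨n₀, hn₀⟩ : sInf (Set.range α) ∈ Set.range α := Nat.sInf_mem ⟨α 0, 0, rfl⟩
  refine ⟨n₀, sInf (Set.range α), fun n hn => le_antisymm ?_ (Nat.sInf_le ⟨n, rfl⟩)⟩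
  calc α n ≤ α n₀ := hmono n₀ n hn
    _ = sInf (Set.range α) := hn₀
end

section
/- Let K be a compact group, ψ: K → K a topological automorphism, and U an open normal subgroup of K. Then H_top(ψ^{-1},U) = H_top(ψ,U). -/
open Filter Topology

lemma key7 {K : Type*} [Group K] (ψ : MulAut K) (U : Subgroup K) (n : ℕ) :
    (⨅ i ∈ Finset.range n, U.comap (((ψ⁻¹ : MulAut K) ^ i : MulAut K) : K →* K) :
      Subgroup K).index =
    (⨅ i ∈ Finset.range n, U.comap ((ψ ^ i : MulAut K) : K →* K) : Subgroup K).index := by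
  rcases Nat.eq_zero_or_pos n with h | h
  · simp [h]
  have hkey : (⨅ i ∈ Finset.range n, U.comap (((ψ⁻¹ : MulAut K) ^ i : MulAut K) : K →* K) :
      Subgroup K) =
      Subgroup.comap (((ψ ^ (n-1) : MulAut K)⁻¹ : MulAut K) : K →* K)
        (⨅ i ∈ Finset.range n, U.comap ((ψ ^ i : MulAut K) : K →* K)) := by
    rw [Subgroup.comap_iInf]
    have reindex : ∀ (f : ℕ → Subgroup K),
        (⨅ i ∈ Finset.range n, f i) = ⨅ i ∈ Finset.range n, f (n-1-i) := by
      intro f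
      apply le_antisymm
      · refine le_iInf₂ fun i hi => ?_
        exact iInf₂_le (n-1-i) (Finset.mem_range.2 (by omega))
      · refine le_iInf₂ fun i hi => ?_
        have hi' := Finset.mem_range.1 hi
        have : f i = f (n-1-(n-1-i)) := by congr 1; omega
        rw [this]
        exact iInf₂_le (n-1-i) (Finset.mem_range.2 (by omega))
    rw [reindex (fun i => U.comap (((ψ⁻¹ : MulAut K) ^ i : MulAut K) : K →* K))]
    refine iInf_congr fun i => ?_
    rw [Subgroup.comap_iInf]
    refine iInf_congr fun hi => ?_
    have hi' := Finset.mem_range.1 hi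
    rw [Subgroup.comap_comap]
    have : ((ψ ^ i : MulAut K) : K →* K).comp
        (((ψ ^ (n-1) : MulAut K)⁻¹ : MulAut K) : K →* K)
        = (((ψ⁻¹ : MulAut K) ^ (n-1-i) : MulAut K) : K →* K) := by
      have h1 : (ψ ^ i : MulAut K) * (ψ ^ (n-1) : MulAut K)⁻¹
          = (ψ⁻¹ : MulAut K) ^ (n-1-i) := by
        obtain ⟨a, ha⟩ : ∃ a, n - 1 = a + i := ⟨n - 1 - i, by omega⟩
        rw [ha, Nat.add_sub_cancel]
        group
      rw [← h1]
      rfl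
    rw [this]
  rw [hkey, Subgroup.index_comap_of_surjective]
  exact ((ψ ^ (n-1) : MulAut K)⁻¹).surjective

/-- `K` compact group, `ψ` a topological automorphism, `U` open normal subgroup.
Then `H_top(ψ⁻¹,U) = H_top(ψ,U)`: if `lim_n log[K : C_n(ψ,U)]/n = L` then also
`lim_n log[K : C_n(ψ⁻¹,U)]/n = L`. -/
theorem statement7 {K : Type*} [Group K] [TopologicalSpace K] [IsTopologicalGroup K]
    [CompactSpace K]
    (ψ : MulAut K) (hψ : Continuous ψ) (hψ' : Continuous (ψ⁻¹ : MulAut K))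
    (U : Subgroup K) [U.Normal] (hU : IsOpen (U : Set K))
    (L : ℝ)
    (hL : Tendsto
      (fun n : ℕ =>
        Real.log ((⨅ i ∈ Finset.range n, U.comap ((ψ ^ i : MulAut K) : K →* K) :
          Subgroup K).index) / n)
      atTop (𝓝 L)) :
    Tendsto
      (fun n : ℕ =>
        Real.log ((⨅ i ∈ Finset.range n, U.comap (((ψ⁻¹ : MulAut K) ^ i : MulAut K) : K →* K) :
          Subgroup K).index) / n)
      atTop (𝓝 L) := by
  simpa only [key7] using hL
end

section
/- Let K be a totally disconnected compact group, ψ: K → K a continuous endomorphism, and U an open normal subgroup of K such that K/(Im ψ · C(ψ,U)) is finite. Then H_top(ψ,U) = log[ψ^{-1}(C(ψ,U)) : C(ψ,U)] − log[K : Im ψ · C(ψ,U)]. -/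
open Filter Topology Subgroup Pointwise

/-- An antitone chain of subgroups whose infimum has finite index is eventually
equal to its infimum. -/
lemma aux_stab {K : Type*} [Group K] (S : ℕ → Subgroup K) (hS : Antitone S)
    (T : Subgroup K) (hT : ⨅ n, S n = T) (hfin : T.index ≠ 0) :
    ∃ N, ∀ n ≥ N, S n = T := by
  have hTle : ∀ n, T ≤ S n := fun n => hT ▸ iInf_le S n
  have hdvd : ∀ n, (S n).index ∣ T.index := fun n => Subgroup.index_dvd_of_le (hTle n)
  have hne : ∀ n, (S n).index ≠ 0 := fun n h => hfin (by simpa [h] using hdvd n)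
  have hbdd : ∀ n, (S n).index ≤ T.index := fun n => Nat.le_of_dvd (Nat.pos_of_ne_zero hfin) (hdvd n)
  have hmonog : Monotone fun n => (S n).index := by
    intro a b hab
    exact Nat.le_of_dvd (Nat.pos_of_ne_zero (hne b)) (Subgroup.index_dvd_of_le (hS hab))
  -- the supremum of the index values is attained
  have hbddA : BddAbove (Set.range fun n => (S n).index) := ⟨T.index, by rintro _ ⟨n, rfl⟩; exact hbdd n⟩
  have hmem : sSup (Set.range fun n => (S n).index) ∈ Set.range fun n => (S n).index :=
    Nat.sSup_mem ⟨(S 0).index, ⟨0, rfl⟩⟩ hbddA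
  obtain ⟨N, hN⟩ := hmem
  have hconst : ∀ n ≥ N, S n = S N := by
    intro n hn
    have h1 : S n ≤ S N := hS hn
    have h2 : (S n).index = (S N).index := by
      have hle : (S N).index ≤ (S n).index := hmonog hn
      have hge : (S n).index ≤ sSup (Set.range fun n => (S n).index) :=
        le_csSup hbddA ⟨n, rfl⟩
      rw [← hN] at hge
      exact le_antisymm hge hle
    have h3 : (S n).relIndex (S N) * (S N).index = (S n).index :=
      Subgroup.relIndex_mul_index h1
    have h4 : (S n).relIndex (S N) = 1 := by
      have h5 : (S n).relIndex (S N) * (S N).index = 1 * (S N).index := by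
        rw [one_mul, h3, h2]
      exact Nat.eq_of_mul_eq_mul_right (Nat.pos_of_ne_zero (hne N)) h5
    exact le_antisymm h1 (Subgroup.relIndex_eq_one.mp h4)
  refine ⟨N, fun n hn => ?_⟩
  rw [hconst n hn]
  refine le_antisymm ?_ (hTle N)
  rw [← hT]
  refine le_iInf fun m => ?_
  rcases le_total m N with h | h
  · exact hS h
  · exact (hconst m h).ge

/-- Compactness: sup with an antitone chain of closed normal subgroups commutes
with the infimum. -/
lemma aux_supinf {K : Type*} [Group K] [TopologicalSpace K] [IsTopologicalGroup K]
    [CompactSpace K] [T2Space K] (A : Subgroup K) (hA : IsClosed (A : Set K))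
    (B : ℕ → Subgroup K) (hBn : ∀ n, (B n).Normal) (hBc : ∀ n, IsClosed ((B n) : Set K))
    (hmono : Antitone B) : ⨅ n, (A ⊔ B n) = A ⊔ ⨅ n, B n := by
  refine le_antisymm ?_ (le_iInf fun n => sup_le_sup_left (iInf_le B n) A)
  intro x hx
  rw [Subgroup.mem_iInf] at hx
  set F : ℕ → Set K := fun n => (B n : Set K) ∩ {b | x * b⁻¹ ∈ A} with hF
  have hFne : ∀ n, (F n).Nonempty := by
    intro n
    haveI := hBn n
    have h' : x ∈ ((A : Set K) * (B n : Set K)) := by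
      rw [← Subgroup.mul_normal]; exact hx n
    obtain ⟨a, ha, b, hb, rfl⟩ := h'
    exact ⟨b, hb, by simpa [mul_assoc] using ha⟩
  have hFc : ∀ n, IsClosed (F n) := by
    intro n
    refine (hBc n).inter ?_
    have : Continuous fun b : K => x * b⁻¹ := continuous_const.mul continuous_inv
    exact hA.preimage this
  have hFanti : ∀ n, F (n + 1) ⊆ F n := by
    intro n
    exact Set.inter_subset_inter_left _ (hmono (Nat.le_succ n))
  have hne : (⋂ n, F n).Nonempty :=
    IsCompact.nonempty_iInter_of_sequence_nonempty_isCompact_isClosed F hFanti hFne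
      ((hFc 0).isCompact) hFc
  obtain ⟨b, hb⟩ := hne
  simp only [Set.mem_iInter, hF, Set.mem_inter_iff, SetLike.mem_coe, Set.mem_setOf_eq] at hb
  have hbB : b ∈ ⨅ n, B n := Subgroup.mem_iInf.mpr fun n => (hb n).1
  have haA : x * b⁻¹ ∈ A := (hb 0).2
  have : x = (x * b⁻¹) * b := by group
  rw [this]
  exact mul_mem (Subgroup.mem_sup_left haA) (Subgroup.mem_sup_right hbB)

/-- Topological Formula: `K` totally disconnected compact group, `ψ` continuous
endomorphism, `U` open normal subgroup with `K/(Im ψ · C(ψ,U))` finite, where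
`C(ψ,U) = ⋂_{n≥0} ψ^{-n}(U)`.  Then
`H_top(ψ,U) = log[ψ^{-1}(C(ψ,U)) : C(ψ,U)] − log[K : Im ψ · C(ψ,U)]`. -/
theorem statement9 {K : Type*} [Group K] [TopologicalSpace K] [IsTopologicalGroup K]
    [CompactSpace K] [TotallyDisconnectedSpace K]
    (ψ : Monoid.End K) (hψ : Continuous ψ)
    (U : Subgroup K) [U.Normal] (hU : IsOpen (U : Set K))
    (C : Subgroup K) (hC : C = ⨅ i : ℕ, U.comap (ψ ^ i : K →* K))
    (hfin : ((ψ : K →* K).range ⊔ C).index ≠ 0) :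
    Tendsto
      (fun n : ℕ =>
        Real.log ((⨅ i ∈ Finset.range n, U.comap (ψ ^ i : K →* K) : Subgroup K).index) / n)
      atTop
      (𝓝 (Real.log (C.relIndex (C.comap (ψ : K →* K))) -
        Real.log (((ψ : K →* K).range ⊔ C).index))) := by
  haveI : T2Space K := inferInstance
  set Cn : ℕ → Subgroup K := fun n => ⨅ i ∈ Finset.range n, U.comap (ψ ^ i : K →* K) with hCndef
  -- membership
  have memCn : ∀ (n : ℕ) (x : K), x ∈ Cn n ↔ ∀ i < n, (ψ ^ i : K →* K) x ∈ U := by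
    intro n x
    simp only [hCndef, Subgroup.mem_iInf, Subgroup.mem_comap, Finset.mem_range]
    exact Iff.rfl
  have memC : ∀ x : K, x ∈ C ↔ ∀ i : ℕ, (ψ ^ i : K →* K) x ∈ U := by
    intro x; rw [hC]; simp only [Subgroup.mem_iInf, Subgroup.mem_comap]; exact Iff.rfl
  have key : ∀ (i : ℕ) (x : K), (ψ ^ (i + 1) : K →* K) x = (ψ ^ i : K →* K) (ψ x) := by
    intro i x; rw [pow_succ]; rfl
  -- recurrence for the subgroups
  have hCnsucc : ∀ n, Cn (n + 1) = U ⊓ (Cn n).comap (ψ : K →* K) := by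
    intro n
    ext x
    simp only [memCn, Subgroup.mem_inf, Subgroup.mem_comap (f := (ψ : K →* K))]
    constructor
    · intro h
      refine ⟨h 0 (Nat.succ_pos n), fun i hi => ?_⟩
      have := h (i + 1) (by omega); rw [key] at this; exact this
    · rintro ⟨h0, h⟩ i hi
      cases i with
      | zero => exact h0
      | succ i => rw [key]; exact h i (by omega)
  -- basic properties of C
  have hUC : U ⊓ C.comap (ψ : K →* K) = C := by
    ext x
    simp only [Subgroup.mem_inf, Subgroup.mem_comap (f := (ψ : K →* K)), memC]
    constructor
    · rintro ⟨h0, h⟩ i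
      cases i with
      | zero => exact h0
      | succ i => rw [key]; exact h i
    · intro h
      exact ⟨h 0, fun i => by have := h (i + 1); rw [key] at this; exact this⟩
  have hCinf : ⨅ n, Cn n = C := by
    ext x
    simp only [Subgroup.mem_iInf, memCn, memC]
    exact ⟨fun h i => h (i + 1) i (Nat.lt_succ_self i), fun h n i _ => h i⟩
  -- normality
  have hCnN : ∀ n, (Cn n).Normal := by
    intro n
    constructor
    intro x hx g
    rw [memCn] at hx ⊢
    intro i hi
    have := ‹U.Normal›.conj_mem _ (hx i hi) ((ψ ^ i : K →* K) g)
    simpa [map_mul, map_inv] using this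
  -- topology
  have hCno : ∀ n, IsOpen ((Cn n : Subgroup K) : Set K) := by
    intro n
    induction n with
    | zero =>
        have h0 : Cn 0 = ⊤ := by
          ext x; simp [memCn]
        rw [h0]
        simpa using isOpen_univ
    | succ n ih =>
        rw [hCnsucc n]
        have hco : ((U ⊓ (Cn n).comap (ψ : K →* K) : Subgroup K) : Set K)
            = (U : Set K) ∩ (⇑(ψ : K →* K) ⁻¹' (Cn n : Set K)) := rfl
        rw [hco]
        exact hU.inter (ih.preimage hψ)
  have hCnc : ∀ n, IsClosed ((Cn n : Subgroup K) : Set K) :=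
    fun n => (Cn n).isClosed_of_isOpen (hCno n)
  have hCni : ∀ n, (Cn n).index ≠ 0 := by
    intro n
    haveI := Subgroup.quotient_finite_of_isOpen (Cn n) (hCno n)
    exact Subgroup.index_ne_zero_of_finite
  have hUi : U.index ≠ 0 := by
    haveI := Subgroup.quotient_finite_of_isOpen U hU
    exact Subgroup.index_ne_zero_of_finite
  have hmono : Antitone Cn := by
    intro a b hab x hx
    rw [memCn] at hx ⊢
    exact fun i hi => hx i (lt_of_lt_of_le hi hab)
  -- chain 1 : range ψ ⊔ Cn n
  have hRclosed : IsClosed (((ψ : K →* K).range : Subgroup K) : Set K) := by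
    have hr : (((ψ : K →* K).range : Subgroup K) : Set K) = Set.range ψ := by
      ext x; simp [MonoidHom.mem_range (f := (ψ : K →* K)), Set.mem_range]; exact Iff.rfl
    rw [hr]
    exact (isCompact_range hψ).isClosed
  have hchain1 : ⨅ n, ((ψ : K →* K).range ⊔ Cn n) = (ψ : K →* K).range ⊔ C := by
    rw [aux_supinf _ hRclosed Cn hCnN hCnc hmono, hCinf]
  obtain ⟨N₁, hN₁⟩ := aux_stab (fun n => (ψ : K →* K).range ⊔ Cn n)
    (fun a b hab => sup_le_sup_left (hmono hab) _) _ hchain1 hfin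
  have hN₁' : ∀ n, N₁ ≤ n → (ψ : K →* K).range ⊔ Cn n = (ψ : K →* K).range ⊔ C := hN₁
  -- chain 2 : U ⊔ (Cn n).comap ψ
  have hAnN : ∀ n, ((Cn n).comap (ψ : K →* K)).Normal := fun n => (hCnN n).comap _
  have hAnc : ∀ n, IsClosed (((Cn n).comap (ψ : K →* K) : Subgroup K) : Set K) :=
    fun n => (hCnc n).preimage hψ
  have hAnmono : Antitone fun n => (Cn n).comap (ψ : K →* K) :=
    fun a b hab => Subgroup.comap_mono (hmono hab)
  have hAinf : ⨅ n, (Cn n).comap (ψ : K →* K) = C.comap (ψ : K →* K) := by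
    ext x
    simp only [Subgroup.mem_iInf, Subgroup.mem_comap (f := (ψ : K →* K))]
    rw [← hCinf]
    simp only [Subgroup.mem_iInf]
  have hchain2 : ⨅ n, (U ⊔ (Cn n).comap (ψ : K →* K)) = U ⊔ C.comap (ψ : K →* K) := by
    rw [aux_supinf U (U.isClosed_of_isOpen hU) _ hAnN hAnc hAnmono, hAinf]
  have hVfin : (U ⊔ C.comap (ψ : K →* K)).index ≠ 0 := by
    intro h
    have hdvd : (U ⊔ C.comap (ψ : K →* K)).index ∣ U.index :=
      Subgroup.index_dvd_of_le le_sup_left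
    rw [h] at hdvd
    exact hUi (Nat.eq_zero_of_zero_dvd hdvd)
  obtain ⟨N₂, hN₂⟩ := aux_stab (fun n => U ⊔ (Cn n).comap (ψ : K →* K))
    (fun a b hab => sup_le_sup_left (hAnmono hab) _) _ hchain2 hVfin
  have hN₂' : ∀ n, N₂ ≤ n → U ⊔ (Cn n).comap (ψ : K →* K) = U ⊔ C.comap (ψ : K →* K) := hN₂
  -- notation
  set u : ℕ := C.relIndex (C.comap (ψ : K →* K)) with hu
  set t : ℕ := ((ψ : K →* K).range ⊔ C).index with ht
  set N : ℕ := max N₁ N₂ with hN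
  -- the numeric recurrence
  have hrec : ∀ n, N ≤ n → (Cn (n + 1)).index * t = u * (Cn n).index := by
    intro n hn
    haveI := hCnN n
    have e1 : (Cn (n + 1)).index
        = U.relIndex ((Cn n).comap (ψ : K →* K)) * ((Cn n).comap (ψ : K →* K)).index := by
      rw [hCnsucc n, ← Subgroup.inf_relIndex_right U ((Cn n).comap (ψ : K →* K)),
        Subgroup.relIndex_mul_index inf_le_right]
    have e2 : U.relIndex ((Cn n).comap (ψ : K →* K)) = u := by
      rw [← Subgroup.relIndex_sup_left, hN₂' n (le_trans (le_max_right _ _) hn),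
        Subgroup.relIndex_sup_left, ← Subgroup.inf_relIndex_right, hUC]
    have e3 : ((Cn n).comap (ψ : K →* K)).index * t = (Cn n).index := by
      rw [Subgroup.index_comap (f := (ψ : K →* K)), ← Subgroup.relIndex_sup_right,
        hN₁' n (le_trans (le_max_left _ _) hn)]
      have hle : Cn n ≤ (ψ : K →* K).range ⊔ C := by
        rw [← hN₁' n (le_trans (le_max_left _ _) hn)]
        exact le_sup_right
      rw [ht]
      exact Subgroup.relIndex_mul_index hle
    calc (Cn (n + 1)).index * t
        = U.relIndex ((Cn n).comap (ψ : K →* K)) * (((Cn n).comap (ψ : K →* K)).index * t) := by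
          rw [e1]; ring
      _ = u * (Cn n).index := by rw [e2, e3]
  have hune : u ≠ 0 := by
    intro h
    have h2 := hrec N le_rfl
    rw [h, zero_mul] at h2
    rcases Nat.mul_eq_zero.mp h2 with h' | h'
    · exact hCni (N + 1) h'
    · exact hfin h'
  -- real logs
  set d : ℝ := Real.log u - Real.log t with hd
  have hlogrec : ∀ n, N ≤ n → Real.log ((Cn (n + 1)).index)
      = Real.log ((Cn n).index) + d := by
    intro n hn
    have h := hrec n hn
    have hcast : ((Cn (n + 1)).index : ℝ) * t = u * (Cn n).index := by exact_mod_cast h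
    have l1 : Real.log (((Cn (n + 1)).index : ℝ) * t) = Real.log (u * ((Cn n).index : ℝ)) := by
      rw [hcast]
    rw [Real.log_mul (by exact_mod_cast hCni (n + 1)) (by exact_mod_cast hfin),
      Real.log_mul (by exact_mod_cast hune) (by exact_mod_cast hCni n)] at l1
    rw [hd]; linarith
  have hlog : ∀ m : ℕ, Real.log ((Cn (N + m)).index)
      = Real.log ((Cn N).index) + m * d := by
    intro m
    induction m with
    | zero => simp
    | succ m ih =>
        have h1 := hlogrec (N + m) (Nat.le_add_right N m)
        have h2 : N + (m + 1) = (N + m) + 1 := by omega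
        rw [h2, h1, ih]
        push_cast
        ring
  -- the limit
  have htend : Tendsto (fun n : ℕ =>
      (Real.log ((Cn N).index) - N * d) / n + d) atTop (𝓝 d) := by
    have h0 : Tendsto (fun n : ℕ =>
        (Real.log ((Cn N).index) - N * d) / n) atTop (𝓝 0) :=
      tendsto_const_div_atTop_nhds_zero_nat _
    simpa using h0.add tendsto_const_nhds
  have heq : (fun n : ℕ => (Real.log ((Cn N).index) - N * d) / n + d)
      =ᶠ[atTop] fun n : ℕ => Real.log ((Cn n).index) / n := by
    filter_upwards [eventually_ge_atTop (N + 1)] with n hn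
    have hNn : N ≤ n := by omega
    have hn0 : (n : ℝ) ≠ 0 := by
      have hp : 0 < n := by omega
      exact_mod_cast hp.ne'
    have h1 : Real.log ((Cn n).index) = Real.log ((Cn N).index) + ((n : ℝ) - N) * d := by
      have h2 := hlog (n - N)
      rw [Nat.add_sub_cancel' hNn] at h2
      rw [h2, Nat.cast_sub hNn]
    rw [h1]
    field_simp
    ring
  exact Tendsto.congr' heq htend
end

section
/- Let K be a totally disconnected compact group, ψ: K → K a continuous surjective endomorphism, and U an open normal subgroup. Writing U₋ = C(ψ,U) = ⋂_{n≥0} ψ^{-n}(U), one has H_top(ψ,U) = log[ψ^{-1}(U₋) : U₋]. If moreover ψ is a topological automorphism and U₊ = ⋂_{n≥0} ψ^{n}(U), then [ψ^{-1}(U₋) : U₋] = [ψ(U₊) : U₊]. -/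
open Filter Topology

open Subgroup Pointwise

private lemma statement11_relIndex_card {K : Type*} [Group K] (U H : Subgroup K) [U.Normal] :
    U.relIndex H = Nat.card (H.map (QuotientGroup.mk' U)) := by
  have h1 : ((QuotientGroup.mk' U).comp H.subtype).ker = U.subgroupOf H := by
    rw [← MonoidHom.comap_ker, QuotientGroup.ker_mk']; rfl
  have h2 := Subgroup.index_ker ((QuotientGroup.mk' U).comp H.subtype)
  rw [h1] at h2
  rw [relIndex, h2, MonoidHom.range_comp, Subgroup.range_subtype]

private lemma statement11_pow_coe {K : Type*} [Group K] (φ : Monoid.End K) (a : MulAut K)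
    (h : (a : K →* K) = φ) (i : ℕ) :
    ((a ^ i : MulAut K) : K →* K) = (φ ^ i : K →* K) := by
  induction i with
  | zero => ext x; rfl
  | succ n ih =>
      ext x
      rw [pow_succ, pow_succ]
      have hx : a x = φ x := by rw [← h]; rfl
      show (a ^ n) (a x) = (φ ^ n : K →* K) (φ x)
      rw [← hx, ← ih]; rfl

private lemma statement11_mapidx {K : Type*} [Group K] (f : MulAut K) (H : Subgroup K) :
    (H.map (f : K →* K)).index = H.index := by
  rw [show (f : K →* K) = f.toMonoidHom from (MulEquiv.toMonoidHom_eq_coe _).symm,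
    Subgroup.map_equiv_eq_comap_symm', Subgroup.index_comap,
    MonoidHom.range_eq_top_of_surjective _ f.symm.surjective, relIndex_top_right]

private lemma statement11_tendsto (idx : ℕ → ℕ) (s : ℕ) (N : ℕ)
    (hpos : ∀ n, idx n ≠ 0) (hs : s ≠ 0)
    (hrec : ∀ n, N ≤ n → idx (n+1) = idx n * s) :
    Tendsto (fun n : ℕ => Real.log (idx n) / n) atTop (𝓝 (Real.log s)) := by
  have hform : ∀ n, N ≤ n → idx n = idx N * s ^ (n - N) := by
    intro n hn
    induction n, hn using Nat.le_induction with
    | base => simp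
    | succ m hm ih =>
        rw [hrec m hm, ih, show m + 1 - N = (m - N) + 1 by omega, pow_succ]
        ring
  have h1 : Tendsto (fun n : ℕ => Real.log (idx N) / n) atTop (𝓝 0) :=
    tendsto_const_div_atTop_nhds_zero_nat _
  have h2 : Tendsto (fun n : ℕ => (1 - (N : ℝ) / n) * Real.log s) atTop
      (𝓝 ((1 - 0) * Real.log s)) :=
    (tendsto_const_nhds.sub (tendsto_const_div_atTop_nhds_zero_nat _)).mul tendsto_const_nhds
  have h3 := h1.add h2
  rw [zero_add, sub_zero, one_mul] at h3
  refine h3.congr' ?_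
  filter_upwards [eventually_ge_atTop (max N 1)] with n hn
  have hnN : N ≤ n := le_trans (le_max_left _ _) hn
  have hn1 : (1 : ℕ) ≤ n := le_trans (le_max_right _ _) hn
  have hn0 : (n : ℝ) ≠ 0 := by exact Nat.cast_ne_zero.2 (by omega)
  have hcast : ((idx n : ℕ) : ℝ) = (idx N : ℝ) * (s : ℝ) ^ (n - N) := by
    rw [hform n hnN]; push_cast; ring
  rw [hcast, Real.log_mul (Nat.cast_ne_zero.2 (hpos N)) (pow_ne_zero _ (Nat.cast_ne_zero.2 hs)),
    Real.log_pow, Nat.cast_sub hnN]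
  field_simp

private lemma statement11_core {K : Type*} [Group K] [TopologicalSpace K] [IsTopologicalGroup K]
    [CompactSpace K]
    (φ : Monoid.End K) (hc : Continuous φ) (hs : Function.Surjective φ)
    (U : Subgroup K) [U.Normal] (hU : IsOpen (U : Set K)) :
    (⨅ i : ℕ, U.comap (φ ^ i : K →* K)) =
        U ⊓ ((⨅ i : ℕ, U.comap (φ ^ i : K →* K)).comap (φ : K →* K)) ∧
    U.relIndex ((⨅ i : ℕ, U.comap (φ ^ i : K →* K)).comap (φ : K →* K)) ≠ 0 ∧
    (∀ n, (⨅ i ∈ Finset.range n, U.comap (φ ^ i : K →* K) : Subgroup K).index ≠ 0) ∧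
    ∃ N, ∀ n, N ≤ n →
      (⨅ i ∈ Finset.range (n+1), U.comap (φ ^ i : K →* K) : Subgroup K).index =
      (⨅ i ∈ Finset.range n, U.comap (φ ^ i : K →* K) : Subgroup K).index *
        U.relIndex ((⨅ i : ℕ, U.comap (φ ^ i : K →* K)).comap (φ : K →* K)) := by
  set C : ℕ → Subgroup K := fun n => ⨅ i ∈ Finset.range n, U.comap (φ ^ i : K →* K) with hC
  set Um : Subgroup K := ⨅ i : ℕ, U.comap (φ ^ i : K →* K) with hUm
  set A : ℕ → Subgroup K := fun n => (C n).comap (φ : K →* K) with hA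
  set Aw : Subgroup K := Um.comap (φ : K →* K) with hAw
  haveI : Finite (K ⧸ U) := U.quotient_finite_of_isOpen hU
  haveI : U.FiniteIndex := Subgroup.finiteIndex_of_finite_quotient
  -- membership characterizations
  have hmemC : ∀ n x, x ∈ C n ↔ ∀ i < n, (φ ^ i : K →* K) x ∈ U := by
    intro n x
    simp only [hC, Subgroup.mem_iInf, Finset.mem_range, Subgroup.mem_comap]; exact Iff.rfl
  have hmemUm : ∀ x, x ∈ Um ↔ ∀ i, (φ ^ i : K →* K) x ∈ U := by
    intro x; simp only [hUm, Subgroup.mem_iInf, Subgroup.mem_comap]; exact Iff.rfl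
  have hpowapp : ∀ (i : ℕ) (x : K), (φ ^ (i+1) : K →* K) x = (φ ^ i : K →* K) (φ x) := by
    intro i x; rw [pow_succ]; rfl
  -- C (n+1) = U ⊓ A n
  have hCsucc : ∀ n, C (n+1) = U ⊓ A n := by
    intro n
    ext x
    rw [hmemC, Subgroup.mem_inf, show x ∈ A n ↔ φ x ∈ C n from Iff.rfl, hmemC]
    constructor
    · intro h
      refine ⟨by simpa using h 0 (Nat.succ_pos n), fun i hi => ?_⟩
      rw [← hpowapp]
      exact h (i+1) (by omega)
    · rintro ⟨h0, h⟩ i hi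
      match i with
      | 0 => simpa using h0
      | (j+1) => rw [hpowapp]; exact h j (by omega)
  have hUmeq : Um = U ⊓ Aw := by
    ext x
    rw [hmemUm, Subgroup.mem_inf, show x ∈ Aw ↔ φ x ∈ Um from Iff.rfl, hmemUm]
    constructor
    · intro h
      exact ⟨h 0, fun i => h (i+1)⟩
    · rintro ⟨h0, h⟩ i
      match i with
      | 0 => exact h0
      | (j+1) => exact h j
  -- basic index facts
  have hrelcard : ∀ H : Subgroup K, U.relIndex H = Nat.card (H.map (QuotientGroup.mk' U)) :=
    fun H => statement11_relIndex_card U H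
  have hrelpos : ∀ H : Subgroup K, U.relIndex H ≠ 0 := by
    intro H
    rw [hrelcard]
    exact Nat.card_pos.ne'
  have hAindex : ∀ n, (A n).index = (C n).index := by
    intro n
    exact Subgroup.index_comap_of_surjective (H := C n) hs
  have hmul : ∀ n, (C (n+1)).index = U.relIndex (A n) * (C n).index := by
    intro n
    have hle : C (n+1) ≤ A n := by rw [hCsucc]; exact inf_le_right
    have h2 := relIndex_mul_index hle
    rw [← h2, hAindex]
    congr 1
    rw [hCsucc]
    exact inf_relIndex_right U (A n)
  have hCpos : ∀ n, (C n).index ≠ 0 := by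
    intro n
    induction n with
    | zero =>
        have : C 0 = ⊤ := by simp [hC]
        rw [this, index_top]; exact one_ne_zero
    | succ m ih => rw [hmul]; exact Nat.mul_ne_zero (hrelpos _) ih
  -- monotonicity
  have hCmono : ∀ {m n : ℕ}, m ≤ n → C n ≤ C m := by
    intro m n h
    refine le_iInf fun i => le_iInf fun hi => ?_
    refine iInf_le_of_le i (iInf_le_of_le ?_ le_rfl)
    exact Finset.mem_range.2 (lt_of_lt_of_le (Finset.mem_range.1 hi) h)
  have hAmono : ∀ {m n : ℕ}, m ≤ n → A n ≤ A m := fun h => Subgroup.comap_mono (hCmono h)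
  have hAwle : ∀ n, Aw ≤ A n := by
    intro n
    refine Subgroup.comap_mono ?_
    exact le_iInf fun i => le_iInf fun hi => iInf_le _ i
  -- topology
  have hUclosed : IsClosed (U : Set K) := U.isClosed_of_isOpen hU
  have hcont : ∀ i : ℕ, Continuous (φ ^ i : K →* K) := by
    intro i
    induction i with
    | zero =>
        have : ⇑(φ ^ 0 : K →* K) = id := by funext x; rfl
        exact continuous_id.congr (fun x => (congrFun this x).symm)
    | succ m ih =>
        have : ⇑(φ ^ (m+1) : K →* K) = ⇑(φ ^ m : K →* K) ∘ ⇑φ := by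
          funext x; exact hpowapp m x
        rw [this]; exact ih.comp hc
  have hCclosed : ∀ n, IsClosed (C n : Set K) := by
    intro n
    have : (C n : Set K) = ⋂ i ∈ Finset.range n, (⇑(φ ^ i : K →* K)) ⁻¹' (U : Set K) := by
      ext x
      simp only [SetLike.mem_coe, hmemC, Set.mem_iInter, Set.mem_preimage, Finset.mem_range]
    rw [this]
    exact isClosed_biInter fun i _ => hUclosed.preimage (hcont i)
  have hAclosed : ∀ n, IsClosed (A n : Set K) := by
    intro n
    have : (A n : Set K) = ⇑φ ⁻¹' (C n : Set K) := rfl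
    rw [this]
    exact (hCclosed n).preimage hc
  set W : Set K := (Aw : Set K) * (U : Set K) with hW
  have hWopen : IsOpen W := hU.mul_left
  have hexN : ∃ N : ℕ, (A N : Set K) ⊆ W := by
    by_contra hcon
    push_neg at hcon
    set Z : ℕ → Set K := fun n => (A n : Set K) ∩ Wᶜ with hZ
    have hZclosed : ∀ n, IsClosed (Z n) := fun n => (hAclosed n).inter hWopen.isClosed_compl
    have hZne : ∀ n, (Z n).Nonempty := by
      intro n
      rcases Set.not_subset.1 (hcon n) with ⟨x, hx, hx'⟩
      exact ⟨x, hx, hx'⟩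
    have hdir : Directed (· ⊇ ·) Z := by
      intro m n
      exact ⟨max m n,
        Set.inter_subset_inter_left _ (hAmono (le_max_left m n)),
        Set.inter_subset_inter_left _ (hAmono (le_max_right m n))⟩
    obtain ⟨x, hx⟩ := IsCompact.nonempty_iInter_of_directed_nonempty_isCompact_isClosed Z hdir hZne
      (fun n => (hZclosed n).isCompact) hZclosed
    simp only [Set.mem_iInter, hZ, Set.mem_inter_iff, Set.mem_compl_iff] at hx
    have hxAw : x ∈ Aw := by
      show φ x ∈ Um; rw [hmemUm]
      intro i
      have := (hx (i+1)).1
      change φ x ∈ C (i+1) at this; rw [hmemC] at this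
      exact this i (by omega)
    exact (hx 0).2 (by simpa using Set.mul_mem_mul hxAw U.one_mem)
  obtain ⟨N, hN⟩ := hexN
  have himg : ∀ n, N ≤ n →
      (A n).map (QuotientGroup.mk' U) = Aw.map (QuotientGroup.mk' U) := by
    intro n hn
    refine le_antisymm ?_ (Subgroup.map_mono (hAwle n))
    rintro - ⟨x, hx, rfl⟩
    have hxW : x ∈ W := hN (hAmono hn hx)
    rw [hW] at hxW
    rcases Set.mem_mul.1 hxW with ⟨b, hb, u, hu, rfl⟩
    have : (QuotientGroup.mk' U) (b * u) = (QuotientGroup.mk' U) b := by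
      rw [map_mul]
      have : ((QuotientGroup.mk' U) u) = 1 := (QuotientGroup.eq_one_iff u).2 hu
      rw [this, mul_one]
    rw [this]
    exact ⟨b, hb, rfl⟩
  refine ⟨hUmeq, hrelpos _, hCpos, N, fun n hn => ?_⟩
  rw [hmul n, mul_comm]
  congr 1
  rw [hrelcard, hrelcard, himg n hn]


/-- `K` totally disconnected compact group, `ψ` continuous surjective
endomorphism, `U` open normal subgroup, `U₋ = C(ψ,U) = ⋂_{n≥0} ψ^{-n}(U)`.  Then
`H_top(ψ,U) = log[ψ^{-1}(U₋) : U₋]`; moreover if `ψ` is a topological automorphism and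
`U₊ = ⋂_{n≥0} ψ^n(U)`, then `[ψ^{-1}(U₋) : U₋] = [ψ(U₊) : U₊]`. -/
theorem statement11 {K : Type*} [Group K] [TopologicalSpace K] [IsTopologicalGroup K]
    [CompactSpace K] [TotallyDisconnectedSpace K]
    (ψ : Monoid.End K) (hψ : Continuous ψ) (hsurj : Function.Surjective ψ)
    (U : Subgroup K) [U.Normal] (hU : IsOpen (U : Set K))
    (Um : Subgroup K) (hUm : Um = ⨅ i : ℕ, U.comap (ψ ^ i : K →* K)) :
    Tendsto
      (fun n : ℕ =>
        Real.log ((⨅ i ∈ Finset.range n, U.comap (ψ ^ i : K →* K) : Subgroup K).index) / n)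
      atTop (𝓝 (Real.log (Um.relIndex (Um.comap (ψ : K →* K))))) ∧
    (∀ e : MulAut K, (e : K →* K) = (ψ : K →* K) → Continuous (e⁻¹ : MulAut K) →
      Um.relIndex (Um.comap (ψ : K →* K)) =
        (⨅ i : ℕ, U.map ((e ^ i : MulAut K) : K →* K) : Subgroup K).relIndex
          ((⨅ i : ℕ, U.map ((e ^ i : MulAut K) : K →* K) : Subgroup K).map (e : K →* K))) := by
  subst hUm
  obtain ⟨hUmeq, hspos, hCpos, N, hrec⟩ := statement11_core ψ hψ hsurj U hU
  have hs1 : (⨅ i : ℕ, U.comap (ψ ^ i : K →* K)).relIndex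
        ((⨅ i : ℕ, U.comap (ψ ^ i : K →* K)).comap (ψ : K →* K)) =
      U.relIndex ((⨅ i : ℕ, U.comap (ψ ^ i : K →* K)).comap (ψ : K →* K)) := by
    nth_rewrite 1 [hUmeq]
    exact inf_relIndex_right _ _
  constructor
  · rw [hs1]
    exact statement11_tendsto _ _ N hCpos hspos hrec
  · intro e he hecont
    set φ₂ : Monoid.End K := MulEquiv.toMonoidHom (e⁻¹ : MulAut K) with hφ₂
    have hc₂ : Continuous φ₂ := hecont
    have hs₂ : Function.Surjective φ₂ := (e⁻¹ : MulAut K).surjective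
    obtain ⟨hUmeq₂, hspos₂, hCpos₂, N₂, hrec₂⟩ := statement11_core φ₂ hc₂ hs₂ U hU
    have hφ₂pow : ∀ i : ℕ, (((e⁻¹) ^ i : MulAut K) : K →* K) = (φ₂ ^ i : K →* K) :=
      statement11_pow_coe φ₂ e⁻¹ rfl
    have hψpow : ∀ i : ℕ, ((e ^ i : MulAut K) : K →* K) = (ψ ^ i : K →* K) :=
      statement11_pow_coe ψ e he
    -- the forward intersection as comaps of φ₂
    have hUpeq : (⨅ i : ℕ, U.comap (φ₂ ^ i : K →* K)) =
        (⨅ i : ℕ, U.map ((e ^ i : MulAut K) : K →* K)) := by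
      refine iInf_congr fun i => ?_
      rw [show ((e ^ i : MulAut K) : K →* K) = (e ^ i).toMonoidHom from
          (MulEquiv.toMonoidHom_eq_coe _).symm,
        Subgroup.map_equiv_eq_comap_symm', ← hφ₂pow i]
      congr 1
      rw [MulEquiv.toMonoidHom_eq_coe]
      congr 1
      rw [← MulAut.inv_def, inv_pow]
    have hmape : (⨅ i : ℕ, U.map ((e ^ i : MulAut K) : K →* K)).map (e : K →* K) =
        (⨅ i : ℕ, U.map ((e ^ i : MulAut K) : K →* K)).comap (φ₂ : K →* K) := by
      rw [show (e : K →* K) = e.toMonoidHom from (MulEquiv.toMonoidHom_eq_coe _).symm,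
        Subgroup.map_equiv_eq_comap_symm']
      congr 1
    have hs2eq : (⨅ i : ℕ, U.map ((e ^ i : MulAut K) : K →* K)).relIndex
          ((⨅ i : ℕ, U.map ((e ^ i : MulAut K) : K →* K)).map (e : K →* K)) =
        U.relIndex ((⨅ i : ℕ, U.comap (φ₂ ^ i : K →* K)).comap (φ₂ : K →* K)) := by
      rw [hmape, ← hUpeq]
      nth_rewrite 1 [hUmeq₂]
      exact inf_relIndex_right _ _
    -- key power identity
    have hkey : ∀ i m : ℕ, i ≤ m → (e ^ i * (e ^ m)⁻¹ : MulAut K) = (e⁻¹) ^ (m - i) := by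
      intro i m him
      have h2 : (e : MulAut K) ^ (m - i) * e ^ i = e ^ m := by
        rw [← pow_add]; congr 1; omega
      calc e ^ i * (e ^ m)⁻¹ = e ^ i * (e ^ (m - i) * e ^ i)⁻¹ := by rw [h2]
        _ = e ^ i * ((e ^ i)⁻¹ * (e ^ (m - i))⁻¹) := by rw [mul_inv_rev]
        _ = (e⁻¹) ^ (m - i) := by rw [← mul_assoc, mul_inv_cancel, one_mul, inv_pow]
    have happ : ∀ (i m : ℕ) (x : K), i ≤ m →
        (e ^ i) ((e ^ m).symm x) = (((e⁻¹) ^ (m - i) : MulAut K)) x := by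
      intro i m x him
      have : (e ^ m).symm x = ((e ^ m)⁻¹ : MulAut K) x := by rw [MulAut.inv_def]
      rw [this, ← MulAut.mul_apply, hkey i m him]
    -- index equality of the two filtrations
    have hidx : ∀ n : ℕ, (⨅ i ∈ Finset.range n, U.comap (φ₂ ^ i : K →* K) : Subgroup K).index =
        (⨅ i ∈ Finset.range n, U.comap (ψ ^ i : K →* K) : Subgroup K).index := by
      intro n
      match n with
      | 0 => simp
      | (m + 1) =>
        have hD : (⨅ i ∈ Finset.range (m+1), U.comap (φ₂ ^ i : K →* K) : Subgroup K) =
            (⨅ i ∈ Finset.range (m+1), U.comap (ψ ^ i : K →* K) : Subgroup K).map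
              ((e ^ m : MulAut K) : K →* K) := by
          ext x
          rw [show ((e ^ m : MulAut K) : K →* K) = (e ^ m).toMonoidHom from
            (MulEquiv.toMonoidHom_eq_coe _).symm, Subgroup.mem_map_equiv]
          simp only [Subgroup.mem_iInf, Finset.mem_range, Subgroup.mem_comap]
          constructor
          · intro h i hi
            rw [← hψpow i]
            show (e ^ i) ((e ^ m).symm x) ∈ U
            rw [happ i m x (by omega)]
            show (((e⁻¹) ^ (m - i) : MulAut K) : K →* K) x ∈ U
            rw [hφ₂pow]
            exact h (m - i) (by omega)
          · intro h i hi
            rw [← hφ₂pow i]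
            have h2 := h (m - i) (by omega)
            rw [← hψpow (m - i)] at h2
            have h3 : ((e ^ (m - i) : MulAut K) : K →* K) ((e ^ m).symm x) =
                (e ^ (m - i)) ((e ^ m).symm x) := rfl
            change (e ^ (m - i)) ((e ^ m).symm x) ∈ U at h2
            rw [happ (m - i) m x (by omega),
              show m - (m - i) = i by omega] at h2
            exact h2
        rw [hD, statement11_mapidx]
    -- conclude equality of the two relIndexes
    rw [hs1, hs2eq]
    have h1 := hrec (max N N₂) (le_max_left _ _)
    have h2 := hrec₂ (max N N₂) (le_max_right _ _)
    rw [hidx (max N N₂ + 1), hidx (max N N₂)] at h2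
    exact Nat.eq_of_mul_eq_mul_left (Nat.pos_of_ne_zero (hCpos (max N N₂)))
      (h1.symm.trans h2)
end

section
/- Let K be a totally disconnected compact group, ψ: K → K a continuous endomorphism, and U an open normal subgroup of K with trivial ψ-cotrajectory C(ψ,U) = {1}. If the cokernel K/Im ψ is finite, then H_top(ψ,U) = log|ker ψ| − log|K/Im ψ|. In particular |ker ψ| ≥ |K/Im ψ| and ker ψ is finite. -/
open Filter Topology Pointwise

private lemma aux_shrink {X : Type*} [TopologicalSpace X] (A : ℕ → Set X)
    (hmono : ∀ {m n : ℕ}, m ≤ n → A n ⊆ A m)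
    (hcpt : ∀ n, IsCompact (A n)) (hcl : ∀ n, IsClosed (A n))
    {V : Set X} (hV : IsOpen V) (hsub : (⋂ n, A n) ⊆ V) : ∃ n, A n ⊆ V := by
  by_contra h
  push_neg at h
  have hne : ∀ n, (A n ∩ Vᶜ).Nonempty := by
    intro n
    obtain ⟨x, hx, hxV⟩ := Set.not_subset.mp (h n)
    exact ⟨x, hx, hxV⟩
  have hdir : Directed (· ⊇ ·) (fun n => A n ∩ Vᶜ) :=
    fun m n => ⟨max m n, Set.inter_subset_inter_left _ (hmono (le_max_left m n)),
      Set.inter_subset_inter_left _ (hmono (le_max_right m n))⟩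
  obtain ⟨x, hx⟩ := IsCompact.nonempty_iInter_of_directed_nonempty_isCompact_isClosed
    (fun n => A n ∩ Vᶜ) hdir hne (fun n => (hcpt n).inter_right hV.isClosed_compl)
    (fun n => (hcl n).inter hV.isClosed_compl)
  have hxA : x ∈ ⋂ n, A n := Set.mem_iInter.mpr fun n => (Set.mem_iInter.mp hx n).1
  exact (Set.mem_iInter.mp hx 0).2 (hsub hxA)

private lemma aux_tendsto (c k : ℕ) (hc : c ≠ 0) (hk : k ≠ 0) (a : ℕ → ℕ)
    (ha : ∀ n, a n ≠ 0) (N0 : ℕ) (hrec : ∀ n, N0 ≤ n → c * a (n + 1) = k * a n) :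
    Tendsto (fun n : ℕ => Real.log (a n) / n) atTop
      (𝓝 (Real.log k - Real.log c)) := by
  set L : ℝ := Real.log k - Real.log c with hL
  have hlog : ∀ n, N0 ≤ n →
      Real.log (a n) = Real.log (a N0) + ((n : ℝ) - (N0 : ℝ)) * L := by
    intro n hn
    induction n, hn using Nat.le_induction with
    | base => simp
    | succ n hn ih =>
      have h := hrec n hn
      have hcast : (c : ℝ) * (a (n + 1) : ℝ) = (k : ℝ) * (a n : ℝ) := by
        exact_mod_cast congrArg (fun m : ℕ => (m : ℝ)) h
      have hlogeq : Real.log c + Real.log (a (n + 1)) = Real.log k + Real.log (a n) := by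
        rw [← Real.log_mul (Nat.cast_ne_zero.mpr hc) (Nat.cast_ne_zero.mpr (ha (n + 1))),
          hcast, Real.log_mul (Nat.cast_ne_zero.mpr hk) (Nat.cast_ne_zero.mpr (ha n))]
      have hstep : Real.log (a (n + 1)) = Real.log (a n) + L := by
        rw [hL]; linarith
      rw [hstep, ih]
      push_cast
      ring
  have h1 : Tendsto (fun n : ℕ => (Real.log (a N0) - (N0 : ℝ) * L) / n + L) atTop
      (𝓝 (0 + L)) :=
    (tendsto_const_div_atTop_nhds_zero_nat _).add tendsto_const_nhds
  rw [zero_add] at h1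
  refine Tendsto.congr' ?_ h1
  filter_upwards [eventually_ge_atTop (max N0 1)] with n hn
  have hn0 : N0 ≤ n := le_trans (le_max_left _ _) hn
  have hnR : (n : ℝ) ≠ 0 := Nat.cast_ne_zero.mpr (by
    have := le_trans (le_max_right N0 1) hn; omega)
  rw [hlog n hn0]
  field_simp
  ring

/-- `K` totally disconnected compact group, `ψ` continuous endomorphism, `U`
open normal subgroup with trivial cotrajectory `C(ψ,U) = ⋂_{n≥0} ψ^{-n}(U) = {1}`.  If the
cokernel `K/Im ψ` is finite, then `H_top(ψ,U) = log|ker ψ| − log|K/Im ψ|`; in particular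
`|ker ψ| ≥ |K/Im ψ|` and `ker ψ` is finite. -/
theorem statement13 {K : Type*} [Group K] [TopologicalSpace K] [IsTopologicalGroup K]
    [CompactSpace K] [TotallyDisconnectedSpace K]
    (ψ : Monoid.End K) (hψ : Continuous ψ)
    (U : Subgroup K) [U.Normal] (hU : IsOpen (U : Set K))
    (hC : (⨅ i : ℕ, U.comap (ψ ^ i : K →* K)) = (⊥ : Subgroup K))
    (hcoker : (ψ : K →* K).range.index ≠ 0) :
    Tendsto
      (fun n : ℕ =>
        Real.log ((⨅ i ∈ Finset.range n, U.comap (ψ ^ i : K →* K) : Subgroup K).index) / n)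
      atTop
      (𝓝 (Real.log (Nat.card (ψ : K →* K).ker) - Real.log ((ψ : K →* K).range.index))) ∧
    (ψ : K →* K).range.index ≤ Nat.card (ψ : K →* K).ker ∧
    ((ψ : K →* K).ker : Set K).Finite := by
  haveI : T2Space K := IsTopologicalGroup.t2Space_iff_one_closed.mpr isClosed_singleton
  have hfc : Continuous (ψ : K →* K) := hψ
  set C : ℕ → Subgroup K := fun n => ⨅ i ∈ Finset.range n, U.comap (ψ ^ i : K →* K)
    with hCdef
  have hpow : ∀ i : ℕ, ((ψ ^ (i + 1) : Monoid.End K) : K →* K)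
      = ((ψ ^ i : Monoid.End K) : K →* K).comp (ψ : K →* K) := fun i => by
    rw [pow_succ]; rfl
  have hstep : ∀ n, C (n + 1) = U ⊓ (C n).comap (ψ : K →* K) := by
    intro n
    have h2 : (C n).comap (ψ : K →* K)
        = ⨅ i ∈ Finset.range n, U.comap ((ψ ^ (i + 1) : Monoid.End K) : K →* K) := by
      rw [hCdef]
      ext x
      erw [Subgroup.mem_comap]
      simp only [Subgroup.mem_iInf]
      exact forall_congr' fun i => forall_congr' fun hi => Iff.rfl
    rw [h2]
    ext x
    simp only [hCdef, Subgroup.mem_iInf, Finset.mem_range, Subgroup.mem_inf,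
      Subgroup.mem_comap]
    constructor
    · intro h
      refine ⟨?_, fun i hi => h (i + 1) (by omega)⟩
      exact h 0 (by omega)
    · rintro ⟨hxU, h⟩ i hi
      cases i with
      | zero => exact hxU
      | succ j => exact h j (by omega)
  have hCzero : C 0 = ⊤ := by simp [hCdef]
  have hCanti : ∀ {m n : ℕ}, m ≤ n → C n ≤ C m := by
    intro m n hmn
    rw [hCdef]
    refine le_iInf₂ fun i hi => ?_
    exact iInf₂_le i (Finset.mem_range.mpr (lt_of_lt_of_le (Finset.mem_range.mp hi) hmn))
  have hCiInf : (⨅ n, C n) = ⊥ := by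
    refine le_antisymm ?_ bot_le
    rw [← hC]
    refine le_iInf fun i => ?_
    refine (iInf_le C (i + 1)).trans ?_
    rw [hCdef]
    exact iInf₂_le i (Finset.mem_range.mpr (by omega))
  have hCopen : ∀ n, IsOpen ((C n : Set K)) := by
    intro n
    induction n with
    | zero => rw [hCzero, Subgroup.coe_top]; exact isOpen_univ
    | succ n ih =>
      rw [hstep n, Subgroup.coe_inf]
      exact hU.inter (ih.preimage hfc)
  have hCclosed : ∀ n, IsClosed ((C n : Set K)) :=
    fun n => Subgroup.isClosed_of_isOpen _ (hCopen n)
  have hCcpt : ∀ n, IsCompact ((C n : Set K)) := fun n => (hCclosed n).isCompact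
  have hCfin : ∀ n, (C n).index ≠ 0 := by
    intro n
    haveI := Subgroup.quotient_finite_of_isOpen (C n) (hCopen n)
    exact Subgroup.index_ne_zero_of_finite
  have hCsetiInf : (⋂ n, ((C n : Set K))) = ({1} : Set K) := by
    rw [← Subgroup.coe_iInf, hCiInf, Subgroup.coe_bot]
  have hkerU : U ⊓ (ψ : K →* K).ker = ⊥ := by
    refine le_antisymm ?_ bot_le
    rw [← hC]
    refine le_iInf fun i => ?_
    rintro x ⟨hxU, hxk⟩
    show (ψ ^ i) x ∈ U
    cases i with
    | zero => exact hxU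
    | succ j =>
      show (ψ ^ j) (ψ x) ∈ U
      have hx1 : (ψ : K →* K) x = 1 := hxk
      rw [hx1]
      simpa using U.one_mem
  haveI hQU : Finite (K ⧸ U) := Subgroup.quotient_finite_of_isOpen U hU
  have hkerinj : Function.Injective
      (fun x : (ψ : K →* K).ker => (QuotientGroup.mk x.1 : K ⧸ U)) := by
    intro a b hab
    have h1 : (a.1)⁻¹ * b.1 ∈ U := QuotientGroup.eq.mp hab
    have h3 : (a.1)⁻¹ * b.1 ∈ U ⊓ (ψ : K →* K).ker :=
      ⟨h1, (ψ : K →* K).ker.mul_mem ((ψ : K →* K).ker.inv_mem a.2) b.2⟩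
    rw [hkerU, Subgroup.mem_bot] at h3
    exact Subtype.ext (inv_mul_eq_one.mp h3)
  haveI hkerfin : Finite (ψ : K →* K).ker := Finite.of_injective _ hkerinj
  have hkerSetFin : (((ψ : K →* K).ker : Set K)).Finite := Set.finite_coe_iff.mp hkerfin
  have hk0 : Nat.card (ψ : K →* K).ker ≠ 0 :=
    Nat.card_ne_zero.mpr ⟨⟨⟨1, (ψ : K →* K).ker.one_mem⟩⟩, hkerfin⟩
  haveI : (ψ : K →* K).range.FiniteIndex := ⟨hcoker⟩
  have hRclosed : IsClosed (((ψ : K →* K).range : Set K)) := by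
    erw [MonoidHom.coe_range]
    exact (isCompact_range hfc).isClosed
  have hRopen : IsOpen (((ψ : K →* K).range : Set K)) :=
    Subgroup.isOpen_of_isClosed_of_finiteIndex _ hRclosed
  have hDclosed : ∀ n, IsClosed (((C n).comap (ψ : K →* K) : Set K)) := fun n => by
    exact (hCclosed n).preimage hfc
  have hDcpt : ∀ n, IsCompact (((C n).comap (ψ : K →* K) : Set K)) :=
    fun n => (hDclosed n).isCompact
  have hDanti : ∀ {m n : ℕ}, m ≤ n →
      (((C n).comap (ψ : K →* K) : Set K)) ⊆ ((C m).comap (ψ : K →* K) : Set K) :=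
    fun hmn => SetLike.coe_subset_coe.mpr (Subgroup.comap_mono (hCanti hmn))
  have hDiInf : (⋂ n, (((C n).comap (ψ : K →* K) : Set K)))
      = (((ψ : K →* K).ker : Set K)) := by
    show (⋂ n, (ψ : K → K) ⁻¹' (C n : Set K)) = _
    rw [← Set.preimage_iInter, hCsetiInf]
    exact (MonoidHom.coe_ker (ψ : K →* K)).symm
  obtain ⟨n1, hn1⟩ := aux_shrink (fun n => (C n : Set K))
    (fun hmn => SetLike.coe_subset_coe.mpr (hCanti hmn)) hCcpt hCclosed hRopen
    (by rw [hCsetiInf]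
        exact Set.singleton_subset_iff.mpr (Subgroup.one_mem _))
  obtain ⟨n2, hn2⟩ := aux_shrink (fun n => ((C n).comap (ψ : K →* K) : Set K))
    (fun hmn => hDanti hmn) hDcpt hDclosed
    (hU.mul_left : IsOpen (((ψ : K →* K).ker : Set K) * (U : Set K)))
    (by rw [hDiInf]
        intro x hx
        simpa using Set.mul_mem_mul hx U.one_mem)
  set N0 := max n1 n2 with hN0
  have hrelU : ∀ n : ℕ, N0 ≤ n →
      U.relIndex ((C n).comap (ψ : K →* K)) = Nat.card (ψ : K →* K).ker := by
    intro n hn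
    have hsub2 : (((C n).comap (ψ : K →* K)) : Set K)
        ⊆ ((ψ : K →* K).ker : Set K) * (U : Set K) :=
      fun x hx => hn2 (hDanti (le_trans (le_max_right n1 n2) hn) hx)
    have hkerle : (ψ : K →* K).ker ≤ (C n).comap (ψ : K →* K) := by
      intro x hx
      show (ψ : K →* K) x ∈ C n
      have hx1 : (ψ : K →* K) x = 1 := hx
      rw [hx1]; exact (C n).one_mem
    rw [Subgroup.relIndex, Subgroup.index_eq_card]
    refine (Nat.card_eq_of_bijective
      (fun x : (ψ : K →* K).ker =>
        (QuotientGroup.mk ⟨x.1, hkerle x.2⟩ :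
          ((C n).comap (ψ : K →* K)) ⧸ U.subgroupOf ((C n).comap (ψ : K →* K)))) ⟨?_, ?_⟩).symm
    · intro a b hab
      have h1 := QuotientGroup.eq.mp hab
      rw [Subgroup.mem_subgroupOf] at h1
      have h1' : (a.1)⁻¹ * b.1 ∈ U := by simpa using h1
      have h3 : (a.1)⁻¹ * b.1 ∈ U ⊓ (ψ : K →* K).ker :=
        ⟨h1', (ψ : K →* K).ker.mul_mem ((ψ : K →* K).ker.inv_mem a.2) b.2⟩
      rw [hkerU, Subgroup.mem_bot] at h3
      exact Subtype.ext (inv_mul_eq_one.mp h3)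
    · intro q
      obtain ⟨⟨d, hd⟩, rfl⟩ := QuotientGroup.mk_surjective q
      obtain ⟨a, ha, u, hu, rfl⟩ := hsub2 hd
      refine ⟨⟨a, ha⟩, ?_⟩
      refine QuotientGroup.eq.mpr ?_
      rw [Subgroup.mem_subgroupOf]
      simpa [inv_mul_cancel_left] using hu
  have hrec : ∀ n : ℕ, N0 ≤ n →
      (ψ : K →* K).range.index * (C (n + 1)).index
        = Nat.card (ψ : K →* K).ker * (C n).index := by
    intro n hn
    have hsub1 : C n ≤ (ψ : K →* K).range := by
      intro x hx
      exact hn1 ((SetLike.coe_subset_coe.mpr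
        (hCanti (le_trans (le_max_left n1 n2) hn))) hx)
    have e1 : ((C n).comap (ψ : K →* K)).index * (ψ : K →* K).range.index
        = (C n).index := by
      erw [Subgroup.index_comap]
      exact Subgroup.relIndex_mul_index hsub1
    have e2 : (C (n + 1)).index
        = U.relIndex ((C n).comap (ψ : K →* K)) * ((C n).comap (ψ : K →* K)).index := by
      have h3 := Subgroup.relIndex_mul_index
        (inf_le_right : U ⊓ (C n).comap (ψ : K →* K) ≤ (C n).comap (ψ : K →* K))
      rw [Subgroup.inf_relIndex_right] at h3
      rw [hstep n, ← h3]
    rw [e2, hrelU n hn, ← e1]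
    ring
  have hial : (C N0).index ≤ (C (N0 + 1)).index :=
    Nat.le_of_dvd (Nat.pos_of_ne_zero (hCfin _))
      (Subgroup.index_dvd_of_le (hCanti (Nat.le_succ N0)))
  have hpart2 : (ψ : K →* K).range.index ≤ Nat.card (ψ : K →* K).ker := by
    have h := hrec N0 le_rfl
    have hpos : 0 < (C (N0 + 1)).index := Nat.pos_of_ne_zero (hCfin _)
    have h2 : (C (N0 + 1)).index * (ψ : K →* K).range.index
        ≤ (C (N0 + 1)).index * Nat.card (ψ : K →* K).ker := by
      calc (C (N0 + 1)).index * (ψ : K →* K).range.index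
          = Nat.card (ψ : K →* K).ker * (C N0).index := by rw [mul_comm]; exact h
        _ ≤ Nat.card (ψ : K →* K).ker * (C (N0 + 1)).index := Nat.mul_le_mul_left _ hial
        _ = (C (N0 + 1)).index * Nat.card (ψ : K →* K).ker := mul_comm _ _
    exact Nat.le_of_mul_le_mul_left h2 hpos
  refine ⟨?_, hpart2, hkerSetFin⟩
  have htd := aux_tendsto (ψ : K →* K).range.index (Nat.card (ψ : K →* K).ker)
    hcoker hk0 (fun n => (C n).index) hCfin N0 hrec
  simpa only [hCdef] using htd
end

section
/- Let G be a torsion abelian group, φ: G → G an endomorphism, and F a finite subgroup of G. Then ker φ ∩ T(φ,F) is finite, where T(φ,F) = ⋃_{n≥1} (F + φ(F) + … + φ^{n-1}(F)) is the smallest φ-invariant subgroup of G containing F. -/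
open AddSubgroup

private def auxS {G : Type*} [AddCommGroup G] (φ : AddMonoid.End G) (F : AddSubgroup G) :
    ℕ → AddSubgroup G
  | 0 => F
  | n + 1 => F ⊔ (auxS φ F n).map (φ : G →+ G)

section Aux

variable {G : Type*} [AddCommGroup G] (φ : AddMonoid.End G) (F : AddSubgroup G)

private lemma auxS_mono : Monotone (auxS φ F) := by
  apply monotone_nat_of_le_succ
  intro n
  induction n with
  | zero => exact le_sup_left
  | succ n ih =>
    show F ⊔ _ ≤ F ⊔ _
    exact sup_le_sup le_rfl (map_mono ih)

private lemma auxS_finite (hF : (F : Set G).Finite) (n : ℕ) :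
    ((auxS φ F n : AddSubgroup G) : Set G).Finite := by
  induction n with
  | zero => exact hF
  | succ n ih =>
    have hM : (((auxS φ F n).map (φ : G →+ G) : AddSubgroup G) : Set G).Finite := by
      exact (ih.image (φ : G →+ G)).subset (fun y hy => by
        obtain ⟨x, hx, rfl⟩ := AddSubgroup.mem_map.mp hy; exact ⟨x, hx, rfl⟩)
    apply (hF.image2 (· + ·) hM).subset
    rintro x hx
    rcases mem_sup.mp hx with ⟨y, hy, z, hz, rfl⟩
    exact Set.mem_image2_of_mem hy hz

private lemma auxS_map_pow_le (i : ℕ) : F.map ((φ ^ i : AddMonoid.End G) : G →+ G) ≤ auxS φ F i := by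
  induction i with
  | zero =>
    have : ((φ ^ 0 : AddMonoid.End G) : G →+ G) = AddMonoidHom.id G := rfl
    rw [this, AddSubgroup.map_id]
    exact le_of_eq rfl
  | succ i ih =>
    have h1 : ((φ ^ (i + 1) : AddMonoid.End G) : G →+ G)
        = (φ : G →+ G).comp ((φ ^ i : AddMonoid.End G) : G →+ G) := by
      rw [pow_succ']; rfl
    rw [h1]; refine le_trans (le_of_eq (AddSubgroup.map_map _ _ _).symm) ?_
    exact le_sup_of_le_right (map_mono ih)

/-- Kernel-image cardinality identity for a finite subgroup. -/
private lemma card_ker_mul_card_map (A : AddSubgroup G) (hA : (A : Set G).Finite) :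
    Nat.card ((φ : G →+ G).ker ⊓ A : AddSubgroup G) * Nat.card (A.map (φ : G →+ G)) =
      Nat.card A := by
  haveI : Finite A := hA.to_subtype
  set f' : A →+ G := (φ : G →+ G).comp A.subtype with hf'
  have hrange : f'.range = A.map (φ : G →+ G) := by
    rw [hf']
    exact (AddMonoidHom.range_comp _ _).trans (congrArg (AddSubgroup.map (φ : G →+ G)) A.range_subtype)
  have e1 : (A ⧸ f'.ker) ≃ (A.map (φ : G →+ G)) := by
    rw [← hrange]
    exact (QuotientAddGroup.quotientKerEquivRange f').toEquiv
  have e2 : ((φ : G →+ G).ker ⊓ A : AddSubgroup G) ≃ f'.ker := by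
    refine ⟨fun x => ⟨⟨x.1, x.2.2⟩, ?_⟩, fun y => ⟨y.1.1, ⟨?_, y.1.2⟩⟩, fun x => rfl,
      fun y => rfl⟩
    · exact x.2.1
    · exact y.2
  have := AddSubgroup.card_eq_card_quotient_mul_card_addSubgroup f'.ker
  rw [Nat.card_congr e1] at this
  rw [Nat.card_congr e2, mul_comm]
  exact this.symm

private lemma card_ker_inf_le (hF : (F : Set G).Finite) (n : ℕ) :
    Nat.card ((φ : G →+ G).ker ⊓ auxS φ F n : AddSubgroup G) ≤ Nat.card F := by
  have hSn := auxS_finite φ F hF n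
  have hSn1 := auxS_finite φ F hF (n + 1)
  haveI : Finite (auxS φ F (n + 1)) := hSn1.to_subtype
  haveI : Finite F := hF.to_subtype
  set M := (auxS φ F n).map (φ : G →+ G) with hM
  have hMfin : (M : Set G).Finite := by
    rw [hM]
    exact (hSn.image (φ : G →+ G)).subset (fun y hy => by
      obtain ⟨x, hx, rfl⟩ := AddSubgroup.mem_map.mp hy; exact ⟨x, hx, rfl⟩)
  haveI : Finite M := hMfin.to_subtype
  have hpos : 0 < Nat.card M := Nat.card_pos
  -- |K n| * |M| = |S n| ≤ |S (n+1)|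
  have h1 : Nat.card ((φ : G →+ G).ker ⊓ auxS φ F n : AddSubgroup G) * Nat.card M ≤
      Nat.card (auxS φ F (n + 1)) := by
    rw [card_ker_mul_card_map φ _ hSn]
    exact Nat.card_le_card_of_injective _
      (AddSubgroup.inclusion_injective (auxS_mono φ F (Nat.le_succ n)))
  -- |S (n+1)| ≤ |F| * |M| via surjection F × M → F ⊔ M
  have h2 : Nat.card (auxS φ F (n + 1)) ≤ Nat.card F * Nat.card M := by
    have hsurj : Function.Surjective
        (fun p : F × M => (⟨p.1.1 + p.2.1,
          mem_sup.mpr ⟨p.1.1, p.1.2, p.2.1, p.2.2, rfl⟩⟩ : (F ⊔ M : AddSubgroup G))) := by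
      rintro ⟨x, hx⟩
      rcases mem_sup.mp hx with ⟨y, hy, z, hz, rfl⟩
      exact ⟨(⟨y, hy⟩, ⟨z, hz⟩), rfl⟩
    have := Nat.card_le_card_of_surjective _ hsurj
    rwa [Nat.card_prod] at this
  exact Nat.le_of_mul_le_mul_right (h1.trans h2) hpos

end Aux

/-- `G` torsion abelian group, `φ` an endomorphism, `F` a finite subgroup.
Then `ker φ ∩ T(φ,F)` is finite, where `T(φ,F) = ⨆ i, φ^i(F)` is the smallest `φ`-invariant
subgroup containing `F`. -/
theorem statement14 {G : Type*} [AddCommGroup G] (hTor : AddMonoid.IsTorsion G)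
    (φ : AddMonoid.End G) (F : AddSubgroup G) (hFfin : (F : Set G).Finite) :
    (((φ : G →+ G).ker ⊓ ⨆ i : ℕ, F.map (φ ^ i : G →+ G) : AddSubgroup G) : Set G).Finite := by
  by_contra hinf
  haveI : Finite F := hFfin.to_subtype
  have hinf' : (((φ : G →+ G).ker ⊓ ⨆ i : ℕ, F.map (φ ^ i : G →+ G) : AddSubgroup G) : Set G).Infinite := hinf
  obtain ⟨t, hts, htcard⟩ := hinf'.exists_subset_card_eq (Nat.card F + 1)
  have hmem : ∀ x ∈ t, ∃ k, x ∈ auxS φ F k := by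
    intro x hx
    have hx' := hts hx
    have hxT : x ∈ (⨆ i : ℕ, F.map ((φ ^ i : AddMonoid.End G) : G →+ G)) := hx'.2
    have hxT' : x ∈ ⨆ n : ℕ, auxS φ F n := by
      refine (iSup_le fun i => le_iSup_of_le i (auxS_map_pow_le φ F i)) hxT
    exact (mem_iSup_of_directed ((auxS_mono φ F).directed_le)).mp hxT'
  choose! nIdx hnIdx using hmem
  set m := t.sup nIdx with hm
  have hsub : (t : Set G) ⊆ (((φ : G →+ G).ker ⊓ auxS φ F m : AddSubgroup G) : Set G) := by
    intro x hx
    have hx' := hts hx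
    exact ⟨hx'.1, auxS_mono φ F (Finset.le_sup hx) (hnIdx x hx)⟩
  have hfin : (((φ : G →+ G).ker ⊓ auxS φ F m : AddSubgroup G) : Set G).Finite :=
    (auxS_finite φ F hFfin m).subset fun x hx => hx.2
  have hcard : (t : Set G).ncard ≤ Nat.card ((φ : G →+ G).ker ⊓ auxS φ F m : AddSubgroup G) := by
    rw [← Nat.card_coe_set_eq]
    exact Set.ncard_le_ncard hsub hfin
  rw [Set.ncard_coe_finset, htcard] at hcard
  have := hcard.trans (card_ker_inf_le φ F hFfin m)
  omega
end

section
/- Let G be a torsion abelian group, φ: G → G an endomorphism, F a finite subgroup, K = Ĝ, ψ = φ̂, U = F^⊥. Then ker φ ∩ T(φ,F) is isomorphic to K/(Im ψ + C(ψ,U)), and T(φ,F)/φ(T(φ,F)) is isomorphic to ψ^{-1}(C(ψ,U))/C(ψ,U). -/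
open scoped Real

/-! ### Auxiliary: the circle is divisible, characters extend -/

noncomputable def circleAddEquiv : AddCircle (2 * Real.pi) ≃+ Additive Circle :=
{ AddCircle.homeomorphCircle'.toEquiv.trans Additive.ofMul with
  map_add' := fun x y => congrArg Additive.ofMul (Real.Angle.toCircle_add x y) }

instance : Fact (0 < 2 * Real.pi) := ⟨by positivity⟩

noncomputable instance : DivisibleBy (Additive Circle) ℤ where
  div z n := circleAddEquiv (DivisibleBy.div (circleAddEquiv.symm z) n)
  div_zero z := by rw [DivisibleBy.div_zero, map_zero]
  div_cancel {n} z hn := by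
    rw [← map_zsmul, DivisibleBy.div_cancel _ hn, AddEquiv.apply_symm_apply]

lemma exists_extension' {G : Type*} [CommGroup G] (H : Subgroup G) (f : H →* Circle) :
    ∃ g : G →* Circle, ∀ h : H, g h = f h := by
  have baer : Module.Baer ℤ (Additive Circle) := Module.Baer.of_divisible _
  obtain ⟨g, hg⟩ := baer.extension_property_addMonoidHom
    (MonoidHom.toAdditive H.subtype)
    (fun a b hab => Subtype.ext (congrArg Additive.toMul hab))
    (MonoidHom.toAdditive f)
  exact ⟨MonoidHom.toAdditive.symm g, fun h => congrArg Additive.toMul (DFunLike.congr_fun hg h)⟩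

/-! ### Auxiliary: a finite abelian group is isomorphic to its character group -/

noncomputable def homCircleEquivUnits (A : Type*) [CommGroup A] [Finite A] :
    (A →* Circle) ≃* (A →* ℂˣ) where
  toFun f := Circle.toUnits.comp f
  invFun f :=
    { toFun := fun a => ⟨((f a : ℂˣ) : ℂ), by
        have h1 : ((f a : ℂˣ) : ℂ) ^ (orderOf a) = 1 := by
          rw [← Units.val_pow_eq_pow_val, ← map_pow, pow_orderOf_eq_one, map_one, Units.val_one]
        exact mem_sphere_zero_iff_norm.2
          (Complex.norm_eq_one_of_pow_eq_one h1 (orderOf_pos a).ne')⟩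
      map_one' := by ext; simp
      map_mul' := fun a b => by ext; simp; rfl }
  left_inv f := by ext a; rfl
  right_inv f := by ext a; rfl
  map_mul' f g := by ext a; rfl

lemma dual_finite (A : Type*) [CommGroup A] [Finite A] : Nonempty ((A →* Circle) ≃* A) := by
  have hpos : 0 < Monoid.exponent A :=
    Monoid.exponent_pos.2 (Monoid.ExponentExists.of_finite)
  have : NeZero ((Monoid.exponent A : ℕ) : ℂ) := ⟨Nat.cast_ne_zero.2 hpos.ne'⟩
  obtain ⟨e⟩ := CommGroup.monoidHom_mulEquiv_of_hasEnoughRootsOfUnity A ℂ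
  exact ⟨(homCircleEquivUnits A).trans e⟩

/-! ### Auxiliary: partial trajectories -/

section Traj
variable {G : Type*} [CommGroup G] (φ : Monoid.End G) (F : Subgroup G)

private def traj : ℕ → Subgroup G
  | 0 => F
  | n+1 => traj n ⊔ F.map (φ^(n+1) : G →* G)

lemma traj_succ_def (n : ℕ) : traj φ F (n+1) = traj φ F n ⊔ F.map (φ^(n+1) : G →* G) := rfl

lemma map_pow_zero : F.map (φ^0 : G →* G) = F := by
  exact Subgroup.map_id F

lemma traj_le_succ (n : ℕ) : traj φ F n ≤ traj φ F (n+1) := le_sup_left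

lemma traj_mono : Monotone (traj φ F) := monotone_nat_of_le_succ (traj_le_succ φ F)

lemma map_le_traj (i : ℕ) : F.map (φ^i : G →* G) ≤ traj φ F i := by
  cases i with
  | zero => exact le_of_eq (map_pow_zero φ F)
  | succ n => rw [traj_succ_def]; exact le_sup_right

lemma traj_le (n : ℕ) : traj φ F n ≤ ⨆ i : ℕ, F.map (φ^i : G →* G) := by
  induction n with
  | zero =>
    have h : F.map (φ^0 : G →* G) ≤ ⨆ i : ℕ, F.map (φ^i : G →* G) :=
      le_iSup (fun i : ℕ => F.map (φ^i : G →* G)) 0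
    rwa [map_pow_zero] at h
  | succ n ih =>
    rw [traj_succ_def]
    exact sup_le ih (le_iSup (fun i : ℕ => F.map (φ^i : G →* G)) (n+1))

lemma iSup_traj : (⨆ i : ℕ, F.map (φ^i : G →* G)) = ⨆ n, traj φ F n :=
  le_antisymm (iSup_le fun i => (map_le_traj φ F i).trans (le_iSup _ i))
    (iSup_le (traj_le φ F))

lemma coe_pow_succ (n : ℕ) : (φ^(n+1) : G →* G) = (φ : G →* G).comp (φ^n : G →* G) := by
  rw [pow_succ']; rfl

lemma traj_succ_eq (n : ℕ) : traj φ F (n+1) = F ⊔ (traj φ F n).map (φ : G →* G) := by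
  induction n with
  | zero =>
    show F ⊔ F.map (φ^1 : G →* G) = F ⊔ F.map (φ : G →* G)
    erw [pow_one]
  | succ n ih =>
    rw [traj_succ_def, ih, coe_pow_succ φ (n+1)]
    erw [← Subgroup.map_map]
    rw [sup_assoc]
    erw [← Subgroup.map_sup (traj φ F n) (F.map (φ^(n+1) : G →* G)) (φ : G →* G)]
    rw [← traj_succ_def, ih]

lemma sup_finite {H K : Subgroup G} (hH : (H : Set G).Finite) (hK : (K : Set G).Finite) :
    ((H ⊔ K : Subgroup G) : Set G).Finite := by
  refine (hH.mul hK).subset ?_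
  rintro x hx
  rcases Subgroup.mem_sup.1 hx with ⟨y, hy, z, hz, rfl⟩
  exact Set.mul_mem_mul hy hz

lemma map_finite {H : Subgroup G} (hH : (H : Set G).Finite) (f : G →* G) :
    ((H.map f : Subgroup G) : Set G).Finite := by
  rw [Subgroup.coe_map]; exact hH.image _

lemma traj_finite (hF : (F : Set G).Finite) (n : ℕ) :
    ((traj φ F n : Subgroup G) : Set G).Finite := by
  induction n with
  | zero => exact hF
  | succ n ih => rw [traj_succ_def]; exact sup_finite ih (map_finite hF _)

lemma card_sup_le {H K : Subgroup G} (hH : (H : Set G).Finite) (hK : (K : Set G).Finite) :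
    Nat.card ↥(H ⊔ K : Subgroup G) ≤ Nat.card ↥H * Nat.card ↥K := by
  haveI : Finite ↥H := hH.to_subtype
  haveI : Finite ↥K := hK.to_subtype
  rw [← Nat.card_prod]
  apply Nat.card_le_card_of_surjective
    (f := fun p : ↥H × ↥K => (⟨p.1.1 * p.2.1,
      Subgroup.mul_mem _ (Subgroup.mem_sup_left p.1.2) (Subgroup.mem_sup_right p.2.2)⟩ :
        ↥(H ⊔ K)))
  rintro ⟨x, hx⟩
  rcases Subgroup.mem_sup.1 hx with ⟨y, hy, z, hz, rfl⟩
  exact ⟨(⟨y, hy⟩, ⟨z, hz⟩), rfl⟩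

lemma card_ker_inf_le_s16 {S : Subgroup G} (hS : (S : Set G).Finite) (hF : (F : Set G).Finite)
    (hle : S ≤ F ⊔ S.map (φ : G →* G)) :
    Nat.card ↥((φ : G →* G).ker ⊓ S) ≤ Nat.card ↥F := by
  haveI : Finite ↥S := hS.to_subtype
  haveI : Finite ↥F := hF.to_subtype
  have hSm : ((S.map (φ : G →* G) : Subgroup G) : Set G).Finite := map_finite hS _
  haveI : Finite ↥(S.map (φ : G →* G)) := hSm.to_subtype
  haveI : Finite ↥(F ⊔ S.map (φ : G →* G) : Subgroup G) := (sup_finite hF hSm).to_subtype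
  set f : ↥S →* G := (φ : G →* G).comp S.subtype with hf
  have hrange : f.range = S.map (φ : G →* G) := by
    ext x
    simp [hf, MonoidHom.mem_range, Subgroup.mem_map, Subtype.exists]
    exact ⟨fun ⟨a, b, h⟩ => ⟨a, b, h⟩, fun ⟨a, b, h⟩ => ⟨a, b, h⟩⟩
  have hkerf : Nat.card f.ker = Nat.card ↥((φ : G →* G).ker ⊓ S) := by
    have h1 : f.ker = (((φ : G →* G).ker ⊓ S).subgroupOf S) := by
      rw [Subgroup.inf_subgroupOf_right]
      rfl
    rw [h1]
    exact Nat.card_congr (Subgroup.subgroupOfEquivOfLe inf_le_right).toEquiv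
  have h1 : Nat.card ↥S = Nat.card ↥(S.map (φ : G →* G)) * Nat.card f.ker := by
    rw [Subgroup.card_eq_card_quotient_mul_card_subgroup f.ker]
    congr 1
    rw [← hrange]
    exact Nat.card_congr (QuotientGroup.quotientKerEquivRange f).toEquiv
  have h2 : Nat.card ↥S ≤ Nat.card ↥F * Nat.card ↥(S.map (φ : G →* G)) := by
    calc Nat.card ↥S ≤ Nat.card ↥(F ⊔ S.map (φ : G →* G) : Subgroup G) :=
          Subgroup.card_le_of_le hle
    _ ≤ _ := card_sup_le hF hSm
  have hpos : 0 < Nat.card ↥(S.map (φ : G →* G)) := Nat.card_pos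
  rw [← hkerf]
  have h3 := h1 ▸ h2
  rw [mul_comm (Nat.card ↥F) _] at h3
  exact Nat.le_of_mul_le_mul_left h3 hpos

end Traj

/-- The annihilator `H^⊥` of a subgroup `H` of `G` in the Pontryagin dual of `G`. -/
def annih {G : Type*} [CommGroup G] [TopologicalSpace G] (H : Subgroup G) :
    Subgroup (PontryaginDual G) where
  carrier := {χ | ∀ x ∈ H, χ x = 1}
  one_mem' := fun x _ => rfl
  mul_mem' := by
    intro χ ξ hχ hξ x hx
    show χ x * ξ x = 1
    rw [hχ x hx, hξ x hx, mul_one]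
  inv_mem' := by
    intro χ hχ x hx
    show (χ x)⁻¹ = 1
    rw [hχ x hx, inv_one]

/-! ### Auxiliary: restriction of characters -/

section Res
variable {G : Type*} [CommGroup G] [TopologicalSpace G] [DiscreteTopology G]

noncomputable def resHom (H : Subgroup G) : PontryaginDual G →* (H →* Circle) where
  toFun χ := (χ : ContinuousMonoidHom G Circle).toMonoidHom.comp H.subtype
  map_one' := rfl
  map_mul' _ _ := rfl

lemma resHom_surjective (H : Subgroup G) : Function.Surjective (resHom H) := by
  intro f
  obtain ⟨g, hg⟩ := exists_extension' H f
  exact ⟨⟨g, continuous_of_discreteTopology⟩, MonoidHom.ext hg⟩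

omit [DiscreteTopology G] in
lemma resHom_ker (H : Subgroup G) : (resHom H).ker = annih H := by
  ext χ
  constructor
  · intro hχ x hx
    exact DFunLike.congr_fun (MonoidHom.mem_ker.1 hχ) (⟨x, hx⟩ : H)
  · intro hχ
    refine MonoidHom.mem_ker.2 (MonoidHom.ext fun h => ?_)
    exact hχ h.1 h.2

end Res

/-- `G` (discrete) torsion abelian, `φ` an endomorphism, `F` finite subgroup,
`K = Ĝ`, `ψ = φ̂`, `U = F^⊥`, `T = T(φ,F)`, `C = C(ψ,U)`.  Then
`ker φ ∩ T ≅ K/(Im ψ · C)` and `T/φ(T) ≅ ψ^{-1}(C)/C`. -/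
theorem statement16 {G : Type*} [CommGroup G] [TopologicalSpace G] [DiscreteTopology G]
    (hTor : Monoid.IsTorsion G)
    (φ : Monoid.End G) (F : Subgroup G) (hFfin : (F : Set G).Finite)
    (ψ : Monoid.End (PontryaginDual G))
    (hψ : ψ = (PontryaginDual.map ⟨(φ : G →* G), continuous_of_discreteTopology⟩ :
      ContinuousMonoidHom (PontryaginDual G) (PontryaginDual G)).toMonoidHom)
    (T : Subgroup G) (hT : T = ⨆ i : ℕ, F.map (φ ^ i : G →* G))
    (C : Subgroup (PontryaginDual G))
    (hC : C = ⨅ i : ℕ, (annih F).comap (ψ ^ i : _ →* _)) :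
    Nonempty
      ((((φ : G →* G).ker ⊓ T : Subgroup G)) ≃*
        (PontryaginDual G ⧸ ((ψ : _ →* _).range ⊔ C))) ∧
    Nonempty
      ((T ⧸ ((T.map (φ : G →* G)).subgroupOf T)) ≃*
        ((C.comap (ψ : _ →* _)) ⧸ (C.subgroupOf (C.comap (ψ : _ →* _))))) := by
  classical
  -- basic facts about ψ
  have hψ1 : ∀ (χ : PontryaginDual G) (x : G), (ψ χ) x = χ (φ x) := by
    intro χ x; rw [hψ]; rfl
  have hψi : ∀ (i : ℕ) (χ : PontryaginDual G) (x : G), ((ψ^i) χ) x = χ ((φ^i) x) := by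
    intro i
    induction i with
    | zero => intro χ x; rfl
    | succ n ih =>
      intro χ x
      have h1 : (ψ^(n+1)) χ = (ψ^n) (ψ χ) := by rw [pow_succ]; rfl
      have h2 : (φ^(n+1)) x = φ ((φ^n) x) := by rw [pow_succ']; rfl
      rw [h1, ih (ψ χ) x, hψ1 χ ((φ^n) x), h2]
  -- C is the annihilator of T
  have hCT : C = annih T := by
    ext χ
    rw [hC]
    simp only [Subgroup.mem_iInf, Subgroup.mem_comap]
    constructor
    · intro h
      show ∀ x ∈ T, χ x = 1
      intro x hx
      rw [hT] at hx
      have hle : (⨆ i : ℕ, F.map (φ^i : G →* G)) ≤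
          MonoidHom.ker (χ : ContinuousMonoidHom G Circle).toMonoidHom := by
        refine iSup_le fun i => ?_
        rintro y ⟨f, hf, rfl⟩
        show χ ((φ^i) f) = 1
        rw [← hψi i χ f]
        exact (h i) f hf
      exact hle hx
    · intro h i
      show ∀ x ∈ F, ((ψ^i) χ) x = 1
      intro f hf
      rw [hψi]
      refine (hT ▸ h : ∀ x ∈ (⨆ i : ℕ, F.map (φ^i : G →* G)), χ x = 1) _ ?_
      exact (le_iSup (fun i : ℕ => F.map (φ^i : G →* G)) i) ⟨f, hf, rfl⟩
  have hmemiff : ∀ ρ : PontryaginDual G, ρ ∈ C ↔ ρ ∈ annih T := fun ρ => by rw [hCT]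
  -- T absorbs F and φ
  have hFT : F ≤ T := by
    have h := le_iSup (fun i : ℕ => F.map (φ^i : G →* G)) 0
    erw [map_pow_zero] at h
    exact hT ▸ h
  have hTφ : T.map (φ : G →* G) ≤ T := by
    erw [hT, Subgroup.map_le_iff_le_comap]
    refine iSup_le fun i => ?_
    erw [← Subgroup.map_le_iff_le_comap, Subgroup.map_map, ← coe_pow_succ]
    exact le_iSup (fun i : ℕ => F.map (φ^i : G →* G)) (i+1)
  have hTsup : T = F ⊔ T.map (φ : G →* G) := by
    refine le_antisymm ?_ (sup_le hFT hTφ)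
    conv_lhs => rw [hT]
    refine iSup_le fun i => ?_
    cases i with
    | zero => erw [map_pow_zero]; exact le_sup_left
    | succ n =>
      erw [coe_pow_succ, ← Subgroup.map_map]
      refine le_trans ?_ le_sup_right
      exact Subgroup.map_mono (le_trans (map_le_traj φ F n) (by
        rw [hT, iSup_traj]
        exact le_iSup (traj φ F) n))
  -- membership in T via partial trajectories
  have hmemT : ∀ x, x ∈ T → ∃ n, x ∈ traj φ F n := by
    intro x hx
    rw [hT, iSup_traj] at hx
    exact (Subgroup.mem_iSup_of_directed ((traj_mono φ F).directed_le)).1 hx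
  -- ker φ ⊓ T is finite
  have hAfin : ((((φ : G →* G).ker ⊓ T : Subgroup G)) : Set G).Finite := by
    by_contra hinf
    have hinf' : ((((φ : G →* G).ker ⊓ T : Subgroup G)) : Set G).Infinite := hinf
    obtain ⟨t, hts, htfin, htcard⟩ := hinf'.exists_subset_ncard_eq (Nat.card ↥F + 1)
    have hchoice : ∀ x ∈ t, ∃ n, x ∈ traj φ F n := by
      intro x hx
      exact hmemT x (Subgroup.mem_inf.1 (hts hx)).2
    choose! N hN using hchoice
    set M := htfin.toFinset.sup N with hM
    have htsub : t ⊆ (((φ : G →* G).ker ⊓ traj φ F M : Subgroup G) : Set G) := by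
      intro x hx
      have h1 := Subgroup.mem_inf.1 (hts hx)
      exact Subgroup.mem_inf.2 ⟨h1.1,
        traj_mono φ F (Finset.le_sup (htfin.mem_toFinset.2 hx)) (hN x hx)⟩
    have hfin2 : (((φ : G →* G).ker ⊓ traj φ F M : Subgroup G) : Set G).Finite :=
      (traj_finite φ F hFfin M).subset (fun x hx => (Subgroup.mem_inf.1 hx).2)
    have hcard1 : Nat.card ↥F + 1 ≤ Nat.card ↥((φ : G →* G).ker ⊓ traj φ F M) := by
      have h2 := Set.ncard_le_ncard htsub hfin2
      rw [htcard] at h2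
      rw [← Nat.card_coe_set_eq] at h2
      exact h2
    have hcard2 := card_ker_inf_le_s16 φ F (traj_finite φ F hFfin M) hFfin
      (by rw [← traj_succ_eq]; exact traj_le_succ φ F M)
    omega
  haveI hAfinite : Finite ↥((φ : G →* G).ker ⊓ T : Subgroup G) := hAfin.to_subtype
  -- kernel of restriction to ker φ ⊓ T
  have hker1 : (resHom ((φ : G →* G).ker ⊓ T)).ker = (ψ : _ →* _).range ⊔ C := by
    apply le_antisymm
    · intro χ hχ
      have hχ' : ∀ x ∈ (φ : G →* G).ker ⊓ T, χ x = 1 := by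
        rw [resHom_ker] at hχ; exact hχ
      set f : ↥T →* G := (φ : G →* G).comp T.subtype with hfdef
      have hkf : f.ker ≤ ((χ : ContinuousMonoidHom G Circle).toMonoidHom.comp T.subtype).ker := by
        intro u hu
        have h1 : (φ : G →* G) u.1 = 1 := MonoidHom.mem_ker.1 hu
        exact hχ' u.1 (Subgroup.mem_inf.2 ⟨h1, u.2⟩)
      set θ : ↥f.range →* Circle :=
        (QuotientGroup.lift f.ker
          ((χ : ContinuousMonoidHom G Circle).toMonoidHom.comp T.subtype) hkf).comp
          (QuotientGroup.quotientKerEquivRange f).symm.toMonoidHom with hθ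
      obtain ⟨g, hg⟩ := exists_extension' f.range θ
      set ξ : PontryaginDual G := ⟨g, continuous_of_discreteTopology⟩ with hξdef
      have key : ∀ u : ↥T, ξ (φ u.1) = χ u.1 := by
        intro u
        have h3 : θ ⟨φ u.1, ⟨u, rfl⟩⟩ = χ u.1 := by
          show (QuotientGroup.lift f.ker _ hkf)
              ((QuotientGroup.quotientKerEquivRange f).symm
                (QuotientGroup.quotientKerEquivRange f ⟦u⟧)) = χ u.1
          rw [MulEquiv.symm_apply_apply]
          rfl
        calc ξ (φ u.1) = g (φ u.1) := rfl
          _ = θ ⟨φ u.1, ⟨u, rfl⟩⟩ := hg ⟨φ u.1, ⟨u, rfl⟩⟩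
          _ = χ u.1 := h3
      have hc : χ * (ψ ξ)⁻¹ ∈ C := by
        rw [hCT]
        show ∀ x ∈ T, (χ * (ψ ξ)⁻¹) x = 1
        intro x hx
        show χ x * ((ψ ξ) x)⁻¹ = 1
        rw [hψ1, key ⟨x, hx⟩]
        simp
      have hdecomp : χ = (χ * (ψ ξ)⁻¹) * (ψ ξ) := by
        rw [inv_mul_cancel_right]
      rw [hdecomp]
      exact Subgroup.mul_mem _ (Subgroup.mem_sup_right hc)
        (Subgroup.mem_sup_left ⟨ξ, rfl⟩)
    · refine sup_le ?_ ?_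
      · rintro χ ⟨ξ, rfl⟩
        rw [resHom_ker]
        show ∀ x ∈ (φ : G →* G).ker ⊓ T, (ψ ξ) x = 1
        intro x hx
        have h1 : (φ : G →* G) x = 1 := (Subgroup.mem_inf.1 hx).1
        rw [hψ1, h1, map_one]
      · intro χ hχ
        rw [resHom_ker]
        rw [hCT] at hχ
        show ∀ x ∈ (φ : G →* G).ker ⊓ T, χ x = 1
        intro x hx
        exact hχ x (Subgroup.mem_inf.1 hx).2
  obtain ⟨eA⟩ := dual_finite ↥((φ : G →* G).ker ⊓ T : Subgroup G)
  constructor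
  · -- first isomorphism
    exact ⟨(((QuotientGroup.quotientMulEquivOfEq hker1).symm.trans
      (QuotientGroup.quotientKerEquivOfSurjective _ (resHom_surjective _))).trans eA).symm⟩
  · -- second isomorphism
    set Nsub := (T.map (φ : G →* G)).subgroupOf T with hNsub
    haveI : Finite ↥F := hFfin.to_subtype
    haveI hQfin : Finite (T ⧸ Nsub) := by
      refine Finite.of_surjective
        (fun f : ↥F => (QuotientGroup.mk (⟨f.1, hFT f.2⟩ : ↥T) : T ⧸ Nsub)) ?_
      intro q
      obtain ⟨u, rfl⟩ := QuotientGroup.mk_surjective q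
      rcases Subgroup.mem_sup.1 (show (u : G) ∈ F ⊔ T.map (φ : G →* G) by rw [← hTsup]; exact u.2) with ⟨y, hy, z, hz, hyz⟩
      refine ⟨⟨y, hy⟩, ?_⟩
      refine (QuotientGroup.eq).2 ?_
      refine Subgroup.mem_subgroupOf.2 ?_
      show ((⟨y, hFT hy⟩ : ↥T)⁻¹ * u : ↥T).1 ∈ T.map (φ : G →* G)
      have hval : ((⟨y, hFT hy⟩ : ↥T)⁻¹ * u : ↥T).1 = z := by
        show y⁻¹ * u.1 = z
        rw [← hyz, inv_mul_cancel_left]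
      rw [hval]
      exact hz
    have hliftker : ∀ χ : ↥(C.comap (ψ : _ →* _)), Nsub ≤
        ((χ.1 : ContinuousMonoidHom G Circle).toMonoidHom.comp T.subtype).ker := by
      intro χ u hu
      obtain ⟨v, hv, hvu⟩ := Subgroup.mem_subgroupOf.1 hu
      have h2 := (hmemiff _).1 (Subgroup.mem_comap.1 χ.2)
      have h3 : χ.1 ((φ : G →* G) v) = 1 := by
        calc χ.1 ((φ : G →* G) v) = (ψ χ.1) v := (hψ1 χ.1 v).symm
          _ = 1 := h2 v hv
      erw [hvu] at h3
      exact h3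
    set rr : ↥(C.comap (ψ : _ →* _)) →* ((T ⧸ Nsub) →* Circle) :=
      { toFun := fun χ => QuotientGroup.lift Nsub
          ((χ.1 : ContinuousMonoidHom G Circle).toMonoidHom.comp T.subtype) (hliftker χ)
        map_one' := MonoidHom.ext fun q => QuotientGroup.induction_on q fun u => rfl
        map_mul' := fun χ ξ =>
          MonoidHom.ext fun q => QuotientGroup.induction_on q fun u => rfl } with hrr
    have hrrsurj : Function.Surjective rr := by
      intro q
      obtain ⟨g, hg⟩ := exists_extension' T (q.comp (QuotientGroup.mk' Nsub))
      have hmem : (⟨g, continuous_of_discreteTopology⟩ : PontryaginDual G) ∈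
          C.comap (ψ : _ →* _) := by
        erw [Subgroup.mem_comap, hCT]
        show ∀ x ∈ T, (ψ ⟨g, continuous_of_discreteTopology⟩) x = 1
        intro x hx
        erw [hψ1]
        have hφx : φ x ∈ T := hTφ ⟨x, hx, rfl⟩
        have hone : (QuotientGroup.mk' Nsub) ⟨φ x, hφx⟩ = 1 := by
          rw [QuotientGroup.mk'_apply, QuotientGroup.eq_one_iff]
          exact Subgroup.mem_subgroupOf.2 ⟨x, hx, rfl⟩
        calc (⟨g, continuous_of_discreteTopology⟩ : PontryaginDual G) ((φ : G →* G) x)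
            = g ((φ : G →* G) x) := rfl
          _ = (q.comp (QuotientGroup.mk' Nsub)) ⟨φ x, hφx⟩ := hg ⟨φ x, hφx⟩
          _ = q ((QuotientGroup.mk' Nsub) ⟨φ x, hφx⟩) := rfl
          _ = q 1 := by rw [hone]
          _ = 1 := map_one q
      refine ⟨⟨⟨g, continuous_of_discreteTopology⟩, hmem⟩, ?_⟩
      refine MonoidHom.ext fun qq => QuotientGroup.induction_on qq fun u => ?_
      exact hg u
    have hker2 : rr.ker = C.subgroupOf (C.comap (ψ : _ →* _)) := by
      ext χ
      constructor
      · intro hχ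
        refine Subgroup.mem_subgroupOf.2 ((hmemiff _).2 ?_)
        show ∀ x ∈ T, χ.1 x = 1
        intro x hx
        exact DFunLike.congr_fun (MonoidHom.mem_ker.1 hχ)
          (QuotientGroup.mk (⟨x, hx⟩ : ↥T) : T ⧸ Nsub)
      · intro hχ
        have hχ' := (hmemiff _).1 (Subgroup.mem_subgroupOf.1 hχ)
        refine MonoidHom.mem_ker.2
          (MonoidHom.ext fun q => QuotientGroup.induction_on q fun u => ?_)
        exact hχ' u.1 u.2
    obtain ⟨eQ⟩ := dual_finite (T ⧸ Nsub)
    exact ⟨(((QuotientGroup.quotientMulEquivOfEq hker2).symm.trans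
      (QuotientGroup.quotientKerEquivOfSurjective rr hrrsurj)).trans eQ).symm⟩
end

section
/- Let K be a totally disconnected compact group and ψ: K → K a topological automorphism such that the pair (K,ψ) has finite depth, i.e., there exists an open subgroup U with ⋂_{n∈ℤ} ψ^n(U) = {1}. Then h_top(ψ) = log depth(ψ), where depth(ψ) = [ψ(U₊) : U₊] for U₊ = ⋂_{n≥0} ψ^n(U) and any antistable open normal subgroup U. -/
open Filter Topology

namespace St18

lemma nat_mono_bdd_const {ι : ℕ → ℕ} (hm : Monotone ι) {B : ℕ} (hb : ∀ n, ι n ≤ B) :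
    ∃ N, ∀ n, N ≤ n → ι n = ι N := by
  have hne : (Set.range ι).Nonempty := ⟨ι 0, ⟨0, rfl⟩⟩
  have hbdd : BddAbove (Set.range ι) := ⟨B, by rintro x ⟨n, rfl⟩; exact hb n⟩
  obtain ⟨N, hN⟩ := Nat.sSup_mem hne hbdd
  refine ⟨N, fun n hn => le_antisymm ?_ (hm hn)⟩
  rw [hN]
  exact le_csSup hbdd ⟨n, rfl⟩

lemma eq_of_le_of_index_eq {G : Type*} [Group G] {H K : Subgroup G} (h : H ≤ K)
    (hi : K.index = H.index) (hne : H.index ≠ 0) : H = K := by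
  have h1 : H.relIndex K * K.index = H.index := Subgroup.relIndex_mul_index h
  rw [hi] at h1
  have : H.relIndex K = 1 := by
    have h2 : H.relIndex K * H.index = 1 * H.index := by rw [h1, one_mul]
    exact Nat.eq_of_mul_eq_mul_right (Nat.pos_of_ne_zero hne) h2
  exact le_antisymm h (Subgroup.relIndex_eq_one.mp this)

lemma normal_iInf₂ {G : Type*} [Group G] {ι : Sort*} {p : ι → Prop} {f : ι → Subgroup G}
    (hf : ∀ i, (f i).Normal) : (⨅ i, ⨅ _ : p i, f i).Normal := by
  constructor
  intro x hx g
  simp only [Subgroup.mem_iInf] at hx ⊢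
  intro i hi
  exact (hf i).conj_mem x (hx i hi) g

end St18

section Phi
variable {K : Type*} [Group K] (ψ : MulAut K)

namespace St18

lemma phi_apply_apply (i j : ℤ) (x : K) :
    (ψ^i : MulAut K) ((ψ^j : MulAut K) x) = (ψ^(i+j) : MulAut K) x := by
  rw [zpow_add, MulAut.mul_apply]

lemma comap_phi_comap (i j : ℤ) (H : Subgroup K) :
    (H.comap ((ψ^j : MulAut K) : K →* K)).comap ((ψ^i : MulAut K) : K →* K)
      = H.comap ((ψ^(j+i) : MulAut K) : K →* K) := by
  ext x
  simp only [Subgroup.mem_comap, MonoidHom.coe_coe, phi_apply_apply]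

lemma map_phi (i : ℤ) (H : Subgroup K) :
    H.map ((ψ^i : MulAut K) : K →* K) = H.comap ((ψ^(-i) : MulAut K) : K →* K) := by
  ext x
  simp only [Subgroup.mem_map, Subgroup.mem_comap, MonoidHom.coe_coe]
  constructor
  · rintro ⟨y, hy, rfl⟩
    rwa [phi_apply_apply, neg_add_cancel, zpow_zero, MulAut.one_apply]
  · intro h
    exact ⟨(ψ^(-i) : MulAut K) x, h, by
      rw [phi_apply_apply, add_neg_cancel, zpow_zero, MulAut.one_apply]⟩

lemma pow_monoidhom_eq (n : ℕ) :
    ((ψ^n : MulAut K) : K →* K) = ((ψ^(n:ℤ) : MulAut K) : K →* K) := by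
  rw [zpow_natCast]

lemma one_monoidhom_eq : ((ψ : MulAut K) : K →* K) = ((ψ^(1:ℤ) : MulAut K) : K →* K) := by
  rw [zpow_one]

variable [TopologicalSpace K]

lemma cont_phi (hψ : Continuous ψ) (hψ' : Continuous (ψ⁻¹ : MulAut K)) (i : ℤ) :
    Continuous ((ψ^i : MulAut K) : K → K) := by
  have hn : ∀ (χ : MulAut K), Continuous χ → ∀ n : ℕ, Continuous ⇑(χ^n) := by
    intro χ hχ n
    induction n with
    | zero => simpa using continuous_id
    | succ k ih =>
        rw [pow_succ]
        have : ⇑(χ^k * χ) = ⇑(χ^k) ∘ ⇑χ := rfl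
        rw [this]
        exact ih.comp hχ
  match i with
  | Int.ofNat n => rw [Int.ofNat_eq_coe, zpow_natCast]; exact hn ψ hψ n
  | Int.negSucc n =>
      rw [zpow_negSucc, ← inv_pow]
      exact hn ψ⁻¹ hψ' (n+1)

end St18
end Phi

section Compactness
variable {K : Type*} [Group K] [TopologicalSpace K] [IsTopologicalGroup K] [CompactSpace K]

namespace St18

lemma mem_sup_iInf (W : Subgroup K) [W.Normal] (hWc : IsClosed (W : Set K))
    (D : ℕ → Subgroup K) (hDa : Antitone D) (hDc : ∀ n, IsClosed ((D n : Set K)))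
    {x : K} (hx : ∀ n, x ∈ W ⊔ D n) : x ∈ W ⊔ (⨅ n, D n) := by
  set t : ℕ → Set K := fun n => (D n : Set K) ∩ {y | x * y⁻¹ ∈ W} with ht
  have hclosed : ∀ n, IsClosed (t n) := by
    intro n
    exact (hDc n).inter (IsClosed.preimage (continuous_const.mul continuous_inv) hWc)
  have hne : ∀ n, (t n).Nonempty := by
    intro n
    have := hx n
    rw [← SetLike.mem_coe, Subgroup.normal_mul W (D n)] at this
    obtain ⟨w, hw, d, hd, rfl⟩ := this
    exact ⟨d, hd, by simpa using hw⟩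
  have hdec : ∀ n, t (n+1) ⊆ t n := by
    intro n
    exact Set.inter_subset_inter_left _ (hDa (Nat.le_succ n))
  obtain ⟨y, hy⟩ := IsCompact.nonempty_iInter_of_sequence_nonempty_isCompact_isClosed t hdec
    hne ((hclosed 0).isCompact) hclosed
  simp only [Set.mem_iInter, ht, Set.mem_inter_iff, SetLike.mem_coe, Set.mem_setOf_eq] at hy
  have hyD : y ∈ ⨅ n, D n := Subgroup.mem_iInf.mpr fun n => (hy n).1
  have hw : x * y⁻¹ ∈ W := (hy 0).2
  have : x = (x * y⁻¹) * y := by group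
  rw [this]
  exact Subgroup.mul_mem _ (Subgroup.mem_sup_left hw) (Subgroup.mem_sup_right hyD)

lemma exists_basis_le (ψ : MulAut K) (hψ : Continuous ψ) (hψ' : Continuous (ψ⁻¹ : MulAut K))
    (U : Subgroup K) (hU : IsOpen (U : Set K))
    (hanti : (⨅ i : ℤ, U.map ((ψ ^ i : MulAut K) : K →* K)) = (⊥ : Subgroup K))
    (V : Subgroup K) (hV : IsOpen (V : Set K)) :
    ∃ m : ℕ, (⨅ i ∈ Finset.Icc (-(m:ℤ)) (m:ℤ), U.comap ((ψ ^ i : MulAut K) : K →* K)) ≤ V := by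
  set F : ℤ → Subgroup K := fun i => U.comap ((ψ ^ i : MulAut K) : K →* K) with hF
  have hanti' : (⨅ i : ℤ, F i) = ⊥ := by
    rw [← hanti]
    apply le_antisymm
    · exact le_iInf fun i => by
        rw [map_phi]
        exact iInf_le _ (-i)
    · exact le_iInf fun i => by
        have := iInf_le (fun i : ℤ => U.map ((ψ ^ i : MulAut K) : K →* K)) (-i)
        rwa [map_phi, neg_neg] at this
  have hFopen : ∀ i, IsOpen ((F i : Set K)) := fun i =>
    hU.preimage (cont_phi ψ hψ hψ' i)
  have hcover : (V : Set K)ᶜ ⊆ ⋃ i : ℤ, ((F i : Set K))ᶜ := by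
    intro x hx
    by_contra hc
    simp only [Set.mem_iUnion, Set.mem_compl_iff, SetLike.mem_coe, not_exists, not_not] at hc
    have : x ∈ (⨅ i : ℤ, F i) := Subgroup.mem_iInf.mpr hc
    rw [hanti'] at this
    rw [Subgroup.mem_bot] at this
    exact hx (by rw [this]; exact Subgroup.one_mem V)
  obtain ⟨s, hs⟩ := (hV.isClosed_compl.isCompact).elim_finite_subcover
    (fun i : ℤ => ((F i : Set K))ᶜ) (fun i => (Subgroup.isClosed_of_isOpen _ (hFopen i)).isOpen_compl)
    hcover
  refine ⟨s.sup (fun i => i.natAbs), fun x hx => ?_⟩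
  by_contra hxV
  have hxc : x ∈ (V : Set K)ᶜ := hxV
  obtain ⟨i, hi, hxi⟩ := Set.mem_iUnion₂.mp (hs hxc)
  simp only [Set.mem_compl_iff, SetLike.mem_coe] at hxi
  apply hxi
  simp only [Subgroup.mem_iInf] at hx
  apply hx
  have : i.natAbs ≤ s.sup (fun i => i.natAbs) := Finset.le_sup hi
  simp only [Finset.mem_Icc]
  omega

end St18
end Compactness

namespace St18

lemma log_div_tendsto (a : ℕ → ℕ) (e N : ℕ) (ha : ∀ n, a n ≠ 0)
    (he : ∀ n, N ≤ n → a (n + 1) = e * a n) :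
    Tendsto (fun n : ℕ => Real.log (a n) / n) atTop (𝓝 (Real.log e)) := by
  have hene : e ≠ 0 := by
    intro h
    apply ha (N + 1)
    rw [he N le_rfl, h, zero_mul]
  have hgeom : ∀ k : ℕ, a (N + k) = e ^ k * a N := by
    intro k
    induction k with
    | zero => simp
    | succ m ih =>
        have : N + (m + 1) = (N + m) + 1 := by ring
        rw [this, he (N + m) (Nat.le_add_right _ _), ih, pow_succ]
        ring
  have key : ∀ n, N ≤ n → Real.log (a n) = ((n : ℝ) - N) * Real.log e + Real.log (a N) := by
    intro n hn
    obtain ⟨k, rfl⟩ := Nat.exists_eq_add_of_le hn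
    rw [hgeom k]
    push_cast
    rw [Real.log_mul (by positivity) (by exact_mod_cast ha N), Real.log_pow]
    push_cast
    ring
  have t1 : Tendsto (fun n : ℕ => (N : ℝ) / n) atTop (𝓝 0) :=
    tendsto_const_div_atTop_nhds_zero_nat (N : ℝ)
  have t2 : Tendsto (fun n : ℕ => ((n : ℝ) - N) / n) atTop (𝓝 1) := by
    have : Tendsto (fun n : ℕ => 1 - (N : ℝ) / n) atTop (𝓝 (1 - 0)) :=
      tendsto_const_nhds.sub t1
    rw [sub_zero] at this
    apply this.congr'
    filter_upwards [eventually_ge_atTop 1] with n hn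
    have hn0 : (n : ℝ) ≠ 0 := Nat.cast_ne_zero.mpr (by omega)
    field_simp
  have t3 : Tendsto (fun n : ℕ => Real.log (a N) / n) atTop (𝓝 0) :=
    tendsto_const_div_atTop_nhds_zero_nat (Real.log (a N))
  have t4 : Tendsto (fun n : ℕ => ((n : ℝ) - N) / n * Real.log e + Real.log (a N) / n)
      atTop (𝓝 (1 * Real.log e + 0)) := (t2.mul tendsto_const_nhds).add t3
  rw [one_mul, add_zero] at t4
  apply t4.congr'
  filter_upwards [eventually_ge_atTop N] with n hn
  rw [key n hn]
  ring

end St18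

section Main
variable {K : Type*} [Group K] [TopologicalSpace K] [IsTopologicalGroup K] [CompactSpace K]

namespace St18

lemma main (ψ : MulAut K) (hψ : Continuous ψ) (hψ' : Continuous (ψ⁻¹ : MulAut K))
    (W : Subgroup K) [hWn : W.Normal] (hW : IsOpen (W : Set K)) {L : ℝ}
    (hL : Tendsto
        (fun n : ℕ =>
          Real.log ((⨅ i ∈ Finset.range n, W.comap ((ψ ^ i : MulAut K) : K →* K) :
            Subgroup K).index) / n)
        atTop (𝓝 L)) :
    L = Real.log (((⨅ n : ℕ, W.map ((ψ ^ n : MulAut K) : K →* K)).relIndex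
      ((⨅ n : ℕ, W.map ((ψ ^ n : MulAut K) : K →* K)).map (ψ : K →* K)))) := by
  classical
  set A : ℤ → Subgroup K := fun j => W.comap ((ψ ^ j : MulAut K) : K →* K) with hA
  have hAopen : ∀ j, IsOpen ((A j : Set K)) := fun j => hW.preimage (cont_phi ψ hψ hψ' j)
  have hAclosed : ∀ j, IsClosed ((A j : Set K)) := fun j =>
    Subgroup.isClosed_of_isOpen _ (hAopen j)
  have hAindex : ∀ j, (A j).index ≠ 0 := fun j =>
    have : Finite (K ⧸ A j) := Subgroup.quotient_finite_of_isOpen _ (hAopen j)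
    Subgroup.index_ne_zero_of_finite
  have comap_A : ∀ (i j : ℤ), (A j).comap ((ψ ^ i : MulAut K) : K →* K) = A (j + i) :=
    fun i j => comap_phi_comap ψ i j W
  have hA0 : A 0 = W := by
    ext x
    simp [hA, Subgroup.mem_comap]
  -- the C_n
  set C : ℕ → Subgroup K := fun n => ⨅ i ∈ Finset.range n, A (i : ℤ) with hC
  have hCstmt : ∀ n : ℕ,
      (⨅ i ∈ Finset.range n, W.comap ((ψ ^ i : MulAut K) : K →* K)) = C n := by
    intro n
    exact iInf_congr fun i => iInf_congr fun _ => by rw [pow_monoidhom_eq]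
  have hCsucc : ∀ n, C (n + 1) = A n ⊓ C n := by
    intro n
    rw [hC]
    simp only [Finset.range_add_one]
    rw [Finset.iInf_insert]
  have hCopen : ∀ n, IsOpen ((C n : Set K)) := by
    intro n
    induction n with
    | zero => simpa [hC] using isOpen_univ
    | succ m ih =>
        rw [hCsucc m]
        rw [Subgroup.coe_inf]
        exact (hAopen m).inter ih
  have hCindex : ∀ n, (C n).index ≠ 0 := fun n =>
    have : Finite (K ⧸ C n) := Subgroup.quotient_finite_of_isOpen _ (hCopen n)
    Subgroup.index_ne_zero_of_finite
  -- the D_n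
  set D : ℕ → Subgroup K := fun n => ⨅ j ∈ Finset.range n, A (-(j : ℤ) - 1) with hD
  have hDanti : Antitone D := by
    intro n m hnm
    exact le_iInf₂ fun j hj =>
      iInf₂_le j (Finset.mem_range.mpr (lt_of_lt_of_le (Finset.mem_range.mp hj) hnm))
  have hDsucc : ∀ n, D (n + 1) = A (-(n : ℤ) - 1) ⊓ D n := by
    intro n
    rw [hD]
    simp only [Finset.range_add_one]
    rw [Finset.iInf_insert]
  have hDopen : ∀ n, IsOpen ((D n : Set K)) := by
    intro n
    induction n with
    | zero => simpa [hD] using isOpen_univ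
    | succ m ih =>
        rw [hDsucc m, Subgroup.coe_inf]
        exact (hAopen _).inter ih
  have hDclosed : ∀ n, IsClosed ((D n : Set K)) := fun n =>
    Subgroup.isClosed_of_isOpen _ (hDopen n)
  -- map of C n under ψ^n is D n
  have hCD : ∀ n : ℕ, (C n).map ((ψ ^ (n : ℤ) : MulAut K) : K →* K) = D n := by
    intro n
    rw [map_phi]
    rw [hC]
    simp only [Subgroup.comap_iInf]
    simp only [comap_A]
    apply le_antisymm
    · apply le_iInf₂
      intro j hj
      have hj' : j < n := Finset.mem_range.mp hj
      refine le_trans (iInf₂_le (n - 1 - j) (Finset.mem_range.mpr (by omega))) ?_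
      rw [show ((n - 1 - j : ℕ) : ℤ) + -(n : ℤ) = -(j : ℤ) - 1 by
        push_cast [Nat.cast_sub] <;> omega]
    · apply le_iInf₂
      intro i hi
      have hi' : i < n := Finset.mem_range.mp hi
      refine le_trans (iInf₂_le (n - 1 - i) (Finset.mem_range.mpr (by omega))) ?_
      rw [show -((n - 1 - i : ℕ) : ℤ) - 1 = (i : ℤ) + -(n : ℤ) by
        push_cast [Nat.cast_sub] <;> omega]
  -- index recursion
  have hrec : ∀ n, (C (n + 1)).index = W.relIndex (D n) * (C n).index := by
    intro n
    have hle : C (n + 1) ≤ C n := by rw [hCsucc]; exact inf_le_right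
    have h1 : (C (n + 1)).relIndex (C n) * (C n).index = (C (n + 1)).index :=
      Subgroup.relIndex_mul_index hle
    have h2 : (C (n + 1)).relIndex (C n) = W.relIndex (D n) := by
      rw [hCsucc, Subgroup.inf_relIndex_right, hA, Subgroup.relIndex_comap, hCD]
    rw [← h1, h2]
  -- stabilization of W ⊔ D n
  have hWindex : W.index ≠ 0 :=
    have : Finite (K ⧸ W) := Subgroup.quotient_finite_of_isOpen _ hW
    Subgroup.index_ne_zero_of_finite
  have hsupdvd : ∀ n, (W ⊔ D n).index ∣ W.index := fun n =>
    Subgroup.index_dvd_of_le le_sup_left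
  have hsupne : ∀ n, (W ⊔ D n).index ≠ 0 := by
    intro n h
    exact hWindex (Nat.eq_zero_of_zero_dvd (h ▸ hsupdvd n))
  have hmono : Monotone (fun n => (W ⊔ D n).index) := by
    intro n m hnm
    have hle : W ⊔ D m ≤ W ⊔ D n := sup_le_sup_left (hDanti hnm) W
    exact Nat.le_of_dvd (Nat.pos_of_ne_zero (hsupne m)) (Subgroup.index_dvd_of_le hle)
  obtain ⟨N, hN⟩ := nat_mono_bdd_const hmono
    (fun n => Nat.le_of_dvd (Nat.pos_of_ne_zero hWindex) (hsupdvd n))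
  have hsupeq : ∀ n, N ≤ n → W ⊔ D n = W ⊔ D N := by
    intro n hn
    exact eq_of_le_of_index_eq (sup_le_sup_left (hDanti hn) W) (hN n hn).symm (hsupne n)
  -- the limit subgroup
  set Dinf : Subgroup K := ⨅ k : ℕ, A (-(k : ℤ) - 1) with hDinf
  have hDinfD : Dinf = ⨅ n, D n := by
    apply le_antisymm
    · exact le_iInf fun n => le_iInf₂ fun j _ => iInf_le _ j
    · exact le_iInf fun k =>
        le_trans (iInf_le _ (k + 1)) (iInf₂_le k (Finset.mem_range.mpr (Nat.lt_succ_self k)))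
  have hsupDinf : W ⊔ D N = W ⊔ Dinf := by
    apply le_antisymm
    · intro x hx
      rw [hDinfD]
      apply mem_sup_iInf W (Subgroup.isClosed_of_isOpen _ hW) D hDanti hDclosed
      intro n
      rcases le_total N n with h | h
      · rw [hsupeq n h]; exact hx
      · exact sup_le_sup_left (hDanti h) W hx
    · exact sup_le_sup_left (by rw [hDinfD]; exact iInf_le _ N) W
  -- the eventual ratio e
  have hrelD : ∀ n, N ≤ n → W.relIndex (D n) = W.relIndex Dinf := by
    intro n hn
    have h1 : ∀ (H : Subgroup K), W.relIndex (W ⊔ H) = W.relIndex H := by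
      intro H
      rw [sup_comm, Subgroup.relIndex_sup_right]
    rw [← h1 (D n), hsupeq n hn, hsupDinf, h1]
  -- identify the statement subgroups
  set Wp : Subgroup K := ⨅ k : ℕ, A (-(k : ℤ)) with hWp
  have hWpstmt : (⨅ n : ℕ, W.map ((ψ ^ n : MulAut K) : K →* K)) = Wp := by
    refine iInf_congr fun n => ?_
    rw [pow_monoidhom_eq, map_phi]
  have hmapWp : Wp.map (ψ : K →* K) = Dinf := by
    rw [one_monoidhom_eq, map_phi, hWp, Subgroup.comap_iInf]
    refine iInf_congr fun k => ?_
    rw [comap_A]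
    congr 1
  have hinfWp : W ⊓ Dinf = Wp := by
    apply le_antisymm
    · apply le_iInf
      intro k
      match k with
      | 0 => rw [Nat.cast_zero, neg_zero, hA0]; exact inf_le_left
      | (m+1) =>
          refine le_trans inf_le_right (le_trans (iInf_le _ m) ?_)
          rw [show -((m : ℤ)) - 1 = -(((m+1 : ℕ) : ℤ)) by push_cast; ring]
    · apply le_inf
      · refine le_trans (iInf_le _ 0) ?_
        rw [Nat.cast_zero, neg_zero, hA0]
      · apply le_iInf
        intro k
        refine le_trans (iInf_le _ (k + 1)) ?_
        rw [show -(((k+1 : ℕ) : ℤ)) = -(k : ℤ) - 1 by push_cast; ring]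
  have hfinal : W.relIndex Dinf = Wp.relIndex (Wp.map (ψ : K →* K)) := by
    rw [hmapWp, ← hinfWp, Subgroup.inf_relIndex_right]
  -- the numeric part
  set e : ℕ := W.relIndex Dinf with he
  have hrec' : ∀ n, N ≤ n → (C (n + 1)).index = e * (C n).index := by
    intro n hn
    rw [hrec n, hrelD n hn]
  have htend : Tendsto (fun n : ℕ => Real.log ((C n).index) / n) atTop (𝓝 (Real.log e)) :=
    log_div_tendsto (fun n => (C n).index) e N hCindex hrec'
  have hLfun : (fun n : ℕ =>
      Real.log ((⨅ i ∈ Finset.range n, W.comap ((ψ ^ i : MulAut K) : K →* K) :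
        Subgroup K).index) / n) = fun n : ℕ => Real.log ((C n).index) / n := by
    funext n
    rw [hCstmt n]
  rw [hLfun] at hL
  have : L = Real.log e := tendsto_nhds_unique hL htend
  rw [this, hWpstmt, ← hfinal]


end St18
end Main

section Assemble
variable {K : Type*} [Group K] [TopologicalSpace K] [IsTopologicalGroup K] [CompactSpace K]

namespace St18

lemma isOpen_biInf {ι : Type*} (s : Finset ι) (f : ι → Subgroup K)
    (hf : ∀ i, IsOpen ((f i : Set K))) : IsOpen ((⨅ i ∈ s, f i : Subgroup K) : Set K) := by
  classical
  induction s using Finset.induction with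
  | empty => simpa using isOpen_univ
  | insert _ _ h ih =>
      rw [Finset.iInf_insert, Subgroup.coe_inf]
      exact (hf _).inter ih

lemma htop_le (ψ : MulAut K) (hψ : Continuous ψ) (hψ' : Continuous (ψ⁻¹ : MulAut K))
    {V W' : Subgroup K} (hV : IsOpen (V : Set K)) (hW : IsOpen (W' : Set K)) (hle : W' ≤ V)
    {LV LW : ℝ}
    (hLV : Tendsto (fun n : ℕ =>
        Real.log ((⨅ i ∈ Finset.range n, V.comap ((ψ ^ i : MulAut K) : K →* K) :
          Subgroup K).index) / n) atTop (𝓝 LV))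
    (hLW : Tendsto (fun n : ℕ =>
        Real.log ((⨅ i ∈ Finset.range n, W'.comap ((ψ ^ i : MulAut K) : K →* K) :
          Subgroup K).index) / n) atTop (𝓝 LW)) : LV ≤ LW := by
  have hcont : ∀ i : ℕ, Continuous (((ψ ^ i : MulAut K) : K →* K) : K → K) := by
    intro i
    simp only [MonoidHom.coe_coe]
    rw [← zpow_natCast ψ i]
    exact cont_phi ψ hψ hψ' (i : ℤ)
  refine le_of_tendsto_of_tendsto hLV hLW ?_
  filter_upwards [] with n
  set Cv := (⨅ i ∈ Finset.range n, V.comap ((ψ ^ i : MulAut K) : K →* K) : Subgroup K)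
  set Cw := (⨅ i ∈ Finset.range n, W'.comap ((ψ ^ i : MulAut K) : K →* K) : Subgroup K)
  have hCle : Cw ≤ Cv := le_iInf₂ fun i hi =>
    le_trans (iInf₂_le i hi) (Subgroup.comap_mono hle)
  have hCwopen : IsOpen ((Cw : Set K)) :=
    isOpen_biInf _ _ (fun i => hW.preimage (hcont i))
  have hCvopen : IsOpen ((Cv : Set K)) :=
    isOpen_biInf _ _ (fun i => hV.preimage (hcont i))
  have hCwne : Cw.index ≠ 0 :=
    have : Finite (K ⧸ Cw) := Subgroup.quotient_finite_of_isOpen _ hCwopen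
    Subgroup.index_ne_zero_of_finite
  have hCvne : Cv.index ≠ 0 :=
    have : Finite (K ⧸ Cv) := Subgroup.quotient_finite_of_isOpen _ hCvopen
    Subgroup.index_ne_zero_of_finite
  have hidx : Cv.index ≤ Cw.index :=
    Nat.le_of_dvd (Nat.pos_of_ne_zero hCwne) (Subgroup.index_dvd_of_le hCle)
  have hlog : Real.log (Cv.index) ≤ Real.log (Cw.index) :=
    Real.log_le_log (by exact_mod_cast Nat.pos_of_ne_zero hCvne) (by exact_mod_cast hidx)
  gcongr

end St18
end Assemble

namespace St18

lemma depth_inv {G : Type*} [Group G] (ψ : MulAut G) (U : Subgroup G) (m : ℕ) :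
    ((⨅ n : ℕ, (⨅ i ∈ Finset.Icc (-(m:ℤ)) (m:ℤ),
        U.comap ((ψ ^ i : MulAut G) : G →* G)).map ((ψ ^ n : MulAut G) : G →* G)).relIndex
      ((⨅ n : ℕ, (⨅ i ∈ Finset.Icc (-(m:ℤ)) (m:ℤ),
        U.comap ((ψ ^ i : MulAut G) : G →* G)).map ((ψ ^ n : MulAut G) : G →* G)).map
          (ψ : G →* G)))
    = (⨅ k : ℕ, U.comap ((ψ ^ (-(k:ℤ)) : MulAut G) : G →* G)).relIndex
        ((⨅ k : ℕ, U.comap ((ψ ^ (-(k:ℤ)) : MulAut G) : G →* G)).map (ψ : G →* G)) := by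
  set A : ℤ → Subgroup G := fun j => U.comap ((ψ ^ j : MulAut G) : G →* G) with hA
  set UpA : Subgroup G := ⨅ k : ℕ, A (-(k:ℤ)) with hUpA
  have comap_A : ∀ (i j : ℤ), (A j).comap ((ψ ^ i : MulAut G) : G →* G) = A (j + i) :=
    fun i j => comap_phi_comap ψ i j U
  have hVmp : (⨅ n : ℕ, (⨅ i ∈ Finset.Icc (-(m:ℤ)) (m:ℤ), A i).map
      ((ψ ^ n : MulAut G) : G →* G)) = UpA.comap ((ψ ^ (m:ℤ) : MulAut G) : G →* G) := by
    have lhs_eq : ∀ n : ℕ, (⨅ i ∈ Finset.Icc (-(m:ℤ)) (m:ℤ), A i).map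
        ((ψ ^ n : MulAut G) : G →* G) = ⨅ i ∈ Finset.Icc (-(m:ℤ)) (m:ℤ), A (i + -(n:ℤ)) := by
      intro n
      rw [pow_monoidhom_eq, map_phi, Subgroup.comap_iInf]
      exact iInf_congr fun i => by rw [Subgroup.comap_iInf]; exact iInf_congr fun _ => comap_A _ _
    have rhs_eq : UpA.comap ((ψ ^ (m:ℤ) : MulAut G) : G →* G) = ⨅ k : ℕ, A (-(k:ℤ) + m) := by
      rw [hUpA, Subgroup.comap_iInf]
      exact iInf_congr fun k => comap_A _ _
    simp only [lhs_eq]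
    rw [rhs_eq]
    apply le_antisymm
    · refine le_iInf fun k => ?_
      refine le_trans (iInf_le _ k) (le_trans (iInf₂_le (m:ℤ) ?_) (le_of_eq ?_))
      · simp only [Finset.mem_Icc]
        omega
      · exact congrArg A (by ring)
    · refine le_iInf fun n => le_iInf₂ fun i hi => ?_
      simp only [Finset.mem_Icc] at hi
      refine le_trans (iInf_le _ ((m - i + n).toNat)) (le_of_eq (congrArg A (by omega)))
  have hmap : ∀ (X : Subgroup G), (X.comap ((ψ ^ (m:ℤ) : MulAut G) : G →* G)).map (ψ : G →* G)
      = (X.map (ψ : G →* G)).comap ((ψ ^ (m:ℤ) : MulAut G) : G →* G) := by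
    intro X
    rw [one_monoidhom_eq, map_phi, map_phi, comap_phi_comap, comap_phi_comap,
      show (m:ℤ) + -1 = -1 + (m:ℤ) from add_comm _ _]
  have hsurj : Function.Surjective (((ψ ^ (m:ℤ) : MulAut G) : G →* G) : G → G) := by
    simp only [MonoidHom.coe_coe]
    exact (ψ ^ (m:ℤ)).surjective
  rw [hVmp, hmap, Subgroup.relIndex_comap, Subgroup.map_comap_eq_self_of_surjective hsurj]

end St18

/-- `K` totally disconnected compact group, `ψ` a topological automorphism such
that `(K,ψ)` has finite depth, witnessed by an antistable open normal subgroup `U`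
(`⋂_{n∈ℤ} ψ^n(U) = {1}`).  Then `h_top(ψ) = log depth(ψ)`, where
`depth(ψ) = [ψ(U₊) : U₊]` with `U₊ = ⋂_{n≥0} ψ^n(U)`, and `h_top(ψ)` is the sup over open
subgroups `V` of `H_top(ψ,V) = lim_n log[K : C_n(ψ,V)]/n`. -/
theorem statement18 {K : Type*} [Group K] [TopologicalSpace K] [IsTopologicalGroup K]
    [CompactSpace K] [TotallyDisconnectedSpace K]
    (ψ : MulAut K) (hψ : Continuous ψ) (hψ' : Continuous (ψ⁻¹ : MulAut K))
    (U : Subgroup K) [U.Normal] (hU : IsOpen (U : Set K))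
    (hanti : (⨅ n : ℤ, U.map ((ψ ^ n : MulAut K) : K →* K)) = (⊥ : Subgroup K))
    (Up : Subgroup K) (hUp : Up = ⨅ n : ℕ, U.map ((ψ ^ n : MulAut K) : K →* K))
    (Htop : Subgroup K → ℝ)
    (hHtop : ∀ V : Subgroup K, IsOpen (V : Set K) →
      Tendsto
        (fun n : ℕ =>
          Real.log ((⨅ i ∈ Finset.range n, V.comap ((ψ ^ i : MulAut K) : K →* K) :
            Subgroup K).index) / n)
        atTop (𝓝 (Htop V))) :
    (⨆ (V : Subgroup K) (_ : IsOpen (V : Set K)), ENNReal.ofReal (Htop V)) =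
      ENNReal.ofReal (Real.log (Up.relIndex (Up.map (ψ : K →* K)))) := by
  have hUpA : Up = ⨅ k : ℕ, U.comap ((ψ ^ (-(k:ℤ)) : MulAut K) : K →* K) := by
    rw [hUp]
    exact iInf_congr fun n => by rw [St18.pow_monoidhom_eq, St18.map_phi]
  have hU_eq : Htop U = Real.log (Up.relIndex (Up.map (ψ : K →* K))) := by
    have := St18.main ψ hψ hψ' U hU (hHtop U hU)
    rwa [← hUp] at this
  apply le_antisymm
  · apply iSup₂_le
    intro V hV
    obtain ⟨m, hm⟩ := St18.exists_basis_le ψ hψ hψ' U hU hanti V hV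
    set Vm : Subgroup K :=
      ⨅ i ∈ Finset.Icc (-(m:ℤ)) (m:ℤ), U.comap ((ψ ^ i : MulAut K) : K →* K) with hVm
    haveI hVmn : Vm.Normal := St18.normal_iInf₂ (fun i => Subgroup.Normal.comap ‹U.Normal› _)
    have hVmopen : IsOpen (Vm : Set K) :=
      St18.isOpen_biInf _ _ (fun i => hU.preimage (St18.cont_phi ψ hψ hψ' i))
    have hVmtop := St18.main ψ hψ hψ' Vm hVmopen (hHtop Vm hVmopen)
    have hinv := St18.depth_inv ψ U m
    have hVle : Htop V ≤ Htop Vm :=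
      St18.htop_le ψ hψ hψ' hV hVmopen hm (hHtop V hV) (hHtop Vm hVmopen)
    have hVmfin : Htop Vm = Real.log (Up.relIndex (Up.map (ψ : K →* K))) := by
      rw [hVmtop, hVm, hinv, ← hUpA]
    calc ENNReal.ofReal (Htop V) ≤ ENNReal.ofReal (Htop Vm) :=
          ENNReal.ofReal_le_ofReal hVle
      _ = ENNReal.ofReal (Real.log (Up.relIndex (Up.map (ψ : K →* K)))) := by rw [hVmfin]
  · rw [← hU_eq]
    exact le_iSup₂ (f := fun (V : Subgroup K) (_ : IsOpen (V : Set K)) =>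
      ENNReal.ofReal (Htop V)) U hU
end
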